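/- arXiv:math/0611935 — 5 statements merged into one kernel-verified Lean document; each statement's English description precedes it below -/
import Mathlib

section
/- Let A be a bounded linear operator on a complex Banach space X, generating the (uniformly continuous) semigroup e^{tA}. Then for every bounded projection P on X, every x ∈ X and every t ≥ 0, the sequence (e^{(t/n)A} P)^n x converges in X as n → ∞. -/
open Filter Topology Nat

set_option linter.unusedSectionVars false
set_option maxHeartbeats 1000000

section lemmas
variable {𝔸 : Type*} [NormedRing 𝔸] [NormedAlgebra ℂ 𝔸] [CompleteSpace 𝔸]

lemma myNormExpLe [NormOneClass 𝔸] (u : 𝔸) : ‖NormedSpace.exp u‖ ≤ Real.exp ‖u‖ := by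
  rw [Real.exp_eq_exp_ℝ, NormedSpace.exp_eq_tsum ℂ (𝔸 := 𝔸), NormedSpace.exp_eq_tsum ℝ (𝔸 := ℝ)]
  refine (norm_tsum_le_tsum_norm (NormedSpace.norm_expSeries_summable' u)).trans ?_
  refine Summable.tsum_le_tsum ?_ (NormedSpace.norm_expSeries_summable' u)
    (NormedSpace.expSeries_summable' (𝕂 := ℝ) ‖u‖)
  intro n
  rw [norm_smul, smul_eq_mul, norm_inv, Complex.norm_natCast]
  exact mul_le_mul_of_nonneg_left (norm_pow_le u n) (by positivity)

lemma myExpRemainder [NormOneClass 𝔸] (u : 𝔸) :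
    ‖NormedSpace.exp u - 1 - u‖ ≤ ‖u‖ ^ 2 * Real.exp ‖u‖ := by
  have hs : Summable fun n : ℕ => (n !⁻¹ : ℂ) • u ^ n :=
    NormedSpace.expSeries_summable' (𝕂 := ℂ) u
  have hs1 : Summable fun n : ℕ => ((n + 1)!⁻¹ : ℂ) • u ^ (n + 1) :=
    (summable_nat_add_iff 1).2 hs
  have h0 : NormedSpace.exp u = ∑' n : ℕ, (n !⁻¹ : ℂ) • u ^ n := by
    rw [NormedSpace.exp_eq_tsum ℂ]
  have key : NormedSpace.exp u - 1 - u = ∑' n : ℕ, ((n + 2)!⁻¹ : ℂ) • u ^ (n + 2) := by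
    rw [h0, hs.tsum_eq_zero_add, hs1.tsum_eq_zero_add]
    simp [Nat.factorial]
  rw [key]
  have hnorm : Summable fun n : ℕ => ‖((n + 2)!⁻¹ : ℂ) • u ^ (n + 2)‖ :=
    (summable_nat_add_iff 2).2 (NormedSpace.norm_expSeries_summable' u)
  refine (norm_tsum_le_tsum_norm hnorm).trans ?_
  have hRHS : Summable fun n : ℕ => ‖u‖ ^ 2 * ((n !⁻¹ : ℝ) • ‖u‖ ^ n) :=
    (NormedSpace.expSeries_summable' (𝕂 := ℝ) ‖u‖).mul_left _
  refine (Summable.tsum_le_tsum ?_ hnorm hRHS).trans ?_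
  · intro n
    rw [norm_smul, norm_inv, Complex.norm_natCast, smul_eq_mul]
    have h1 : ‖u ^ (n + 2)‖ ≤ ‖u‖ ^ 2 * ‖u‖ ^ n := by
      calc ‖u ^ (n + 2)‖ ≤ ‖u‖ ^ (n + 2) := norm_pow_le u (n + 2)
        _ = ‖u‖ ^ 2 * ‖u‖ ^ n := by ring
    have h2 : ((n + 2)! : ℝ)⁻¹ ≤ ((n ! : ℝ))⁻¹ := by
      apply inv_anti₀
      · positivity
      · exact_mod_cast Nat.factorial_le (by omega)
    calc ((n + 2)! : ℝ)⁻¹ * ‖u ^ (n + 2)‖ ≤ (n ! : ℝ)⁻¹ * (‖u‖ ^ 2 * ‖u‖ ^ n) :=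
          mul_le_mul h2 h1 (norm_nonneg _) (by positivity)
      _ = ‖u‖ ^ 2 * ((n ! : ℝ)⁻¹ * ‖u‖ ^ n) := by ring
  · rw [tsum_mul_left]
    have h1 : NormedSpace.exp ‖u‖ = ∑' n : ℕ, (n !⁻¹ : ℝ) • ‖u‖ ^ n := by
      rw [NormedSpace.exp_eq_tsum ℝ]
    rw [Real.exp_eq_exp_ℝ, h1]

lemma myExpPow {b p : 𝔸} (hp : p * p = p) (hbp : b * p = b) (hpb : p * b = b)
    (c : ℂ) (j : ℕ) :
    (NormedSpace.exp (c • b) * p) ^ (j + 1)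
      = NormedSpace.exp ((((j : ℂ) + 1) * c) • b) * p := by
  induction j with
  | zero => norm_num
  | succ j ih =>
    have hcomm : Commute p (c • b) := by
      simp only [Commute, SemiconjBy, mul_smul_comm, smul_mul_assoc, hbp, hpb]
    have hexp : p * NormedSpace.exp (c • b) = NormedSpace.exp (c • b) * p :=
      hcomm.exp_right.eq
    have hadd : NormedSpace.exp ((((j : ℂ) + 1) * c) • b) * NormedSpace.exp (c • b)
        = NormedSpace.exp ((((j : ℂ) + 1 + 1) * c) • b) := by
      letI : NormedAlgebra ℚ 𝔸 := .restrictScalars ℚ ℂ 𝔸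
      rw [← NormedSpace.exp_add_of_commute (((Commute.refl b).smul_left _).smul_right _)]
      congr 1
      rw [← add_smul]
      congr 1
      ring
    calc (NormedSpace.exp (c • b) * p) ^ (j + 2)
        = (NormedSpace.exp (c • b) * p) ^ (j + 1) * (NormedSpace.exp (c • b) * p) :=
          pow_succ _ _
      _ = NormedSpace.exp ((((j : ℂ) + 1) * c) • b) * (p * NormedSpace.exp (c • b)) * p := by
          rw [ih]; simp only [mul_assoc]
      _ = NormedSpace.exp ((((j : ℂ) + 1) * c) • b) * NormedSpace.exp (c • b) * (p * p) := by
          rw [hexp]; simp only [mul_assoc]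
      _ = NormedSpace.exp (((((j + 1 : ℕ) : ℂ) + 1) * c) • b) * p := by
          rw [hp, hadd]
          congr 3
          push_cast
          ring
end lemmas

section alg
variable {R : Type*} [Ring R]

lemma myPowSplit {e p : R} (hp : p * p = p) (n : ℕ) :
    (e * p) ^ (n + 1) = e * (p * e * p) ^ n * p := by
  induction n with
  | zero => simp
  | succ n ih =>
    rw [pow_succ, ih, pow_succ]
    have h1 : (p * e * p) ^ n * p * (e * p) = (p * e * p) ^ n * (p * e * p) * p := by
      simp only [mul_assoc, hp]
    simp only [mul_assoc] at h1 ⊢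
    rw [h1]

lemma myTelescope (w v : R) (n : ℕ) :
    w ^ n - v ^ n = ∑ j ∈ Finset.range n, w ^ (n - 1 - j) * (w - v) * v ^ j := by
  induction n with
  | zero => simp
  | succ n ih =>
    rw [Finset.sum_range_succ]
    have hl : ∀ j ∈ Finset.range n, w ^ (n + 1 - 1 - j) * (w - v) * v ^ j
        = w * (w ^ (n - 1 - j) * (w - v) * v ^ j) := by
      intro j hj
      rw [Finset.mem_range] at hj
      have : n + 1 - 1 - j = (n - 1 - j) + 1 := by omega
      rw [this, _root_.pow_succ']
      simp [mul_assoc]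
    rw [Finset.sum_congr rfl hl, ← Finset.mul_sum, ← ih]
    have : n + 1 - 1 - n = 0 := by omega
    rw [this, pow_zero, one_mul, _root_.pow_succ' w, _root_.pow_succ' v]
    noncomm_ring
end alg

section normbound
variable {𝔸 : Type*} [NormedRing 𝔸]

lemma myPowDiff (w v : 𝔸) (M : ℝ) (n : ℕ) (hv : ∀ j, j ≤ n → ‖v ^ j‖ ≤ M) :
    ‖w ^ n - v ^ n‖ ≤ M * ((1 + M * ‖w - v‖) ^ n - 1) := by
  induction n using Nat.strong_induction_on with
  | _ n IH =>
    have hM : 0 ≤ M := le_trans (norm_nonneg _) (hv 0 (Nat.zero_le _))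
    set d := ‖w - v‖ with hd
    have hd0 : 0 ≤ d := norm_nonneg _
    have hq : 0 ≤ M * d := mul_nonneg hM hd0
    rw [myTelescope]
    refine (norm_sum_le _ _).trans ?_
    have hterm : ∀ j ∈ Finset.range n,
        ‖w ^ (n - 1 - j) * (w - v) * v ^ j‖ ≤ (M * (1 + M * d) ^ (n - 1 - j)) * d * M := by
      intro j hj
      rw [Finset.mem_range] at hj
      have hw : ‖w ^ (n - 1 - j)‖ ≤ M * (1 + M * d) ^ (n - 1 - j) := by
        have hlt : n - 1 - j < n := by omega
        have h1 : ‖w ^ (n - 1 - j) - v ^ (n - 1 - j)‖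
            ≤ M * ((1 + M * d) ^ (n - 1 - j) - 1) :=
          IH _ hlt (fun i hi => hv i (by omega))
        have h2 : ‖v ^ (n - 1 - j)‖ ≤ M := hv _ (by omega)
        calc ‖w ^ (n - 1 - j)‖
            ≤ ‖w ^ (n - 1 - j) - v ^ (n - 1 - j)‖ + ‖v ^ (n - 1 - j)‖ := by
              simpa using norm_add_le (w ^ (n - 1 - j) - v ^ (n - 1 - j)) (v ^ (n - 1 - j))
          _ ≤ M * ((1 + M * d) ^ (n - 1 - j) - 1) + M := by linarith
          _ = M * (1 + M * d) ^ (n - 1 - j) := by ring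
      calc ‖w ^ (n - 1 - j) * (w - v) * v ^ j‖
          ≤ ‖w ^ (n - 1 - j) * (w - v)‖ * ‖v ^ j‖ := norm_mul_le _ _
        _ ≤ ‖w ^ (n - 1 - j)‖ * ‖w - v‖ * ‖v ^ j‖ :=
            mul_le_mul_of_nonneg_right (norm_mul_le _ _) (norm_nonneg _)
        _ ≤ (M * (1 + M * d) ^ (n - 1 - j)) * d * M := by
            have h2 : ‖v ^ j‖ ≤ M := hv _ (by omega)
            refine mul_le_mul ?_ h2 (norm_nonneg _) (by positivity)
            exact mul_le_mul hw le_rfl hd0 (by positivity)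
    refine (Finset.sum_le_sum hterm).trans ?_
    have hre : ∑ j ∈ Finset.range n, (M * (1 + M * d) ^ (n - 1 - j)) * d * M
        = ∑ j ∈ Finset.range n, (M * (1 + M * d) ^ j) * d * M := by
      exact Finset.sum_range_reflect (fun j => M * (1 + M * d) ^ j * d * M) n
    rw [hre]
    have hgeom : ∑ j ∈ Finset.range n, (M * (1 + M * d) ^ j) * d * M
        = M * M * d * ∑ j ∈ Finset.range n, (1 + M * d) ^ j := by
      rw [Finset.mul_sum]
      apply Finset.sum_congr rfl
      intro j _
      ring
    rw [hgeom]
    have hgs : (M * d) * ∑ j ∈ Finset.range n, (1 + M * d) ^ j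
        = (1 + M * d) ^ n - 1 := by
      calc (M * d) * ∑ j ∈ Finset.range n, (1 + M * d) ^ j
          = (∑ j ∈ Finset.range n, (1 + M * d) ^ j) * ((1 + M * d) - 1) := by ring
        _ = (1 + M * d) ^ n - 1 := by rw [geom_sum_mul]
    have hfin : M * M * d * ∑ j ∈ Finset.range n, (1 + M * d) ^ j
        = M * ((1 + M * d) ^ n - 1) := by rw [← hgs]; ring
    exact le_of_eq hfin
end normbound

/-- for a bounded generator `A`, the products `(e^{(t/n)A} P)^n x`
converge for every bounded projection `P`, every `x ∈ X` and every `t ≥ 0`. -/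
theorem stmt_1 {X : Type*} [NormedAddCommGroup X] [NormedSpace ℂ X] [CompleteSpace X]
    (A : X →L[ℂ] X) (P : X →L[ℂ] X) (hP : P.comp P = P)
    (x : X) (t : ℝ) (ht : 0 ≤ t) :
    ∃ y : X,
      Tendsto
        (fun n : ℕ =>
          (((NormedSpace.exp (((t / n : ℝ) : ℂ) • A)).comp P) ^ n) x)
        atTop (𝓝 y) := by
  rcases subsingleton_or_nontrivial X with hX | hX
  · refine ⟨0, ?_⟩
    have h : ∀ n : ℕ,
        (((NormedSpace.exp (((t / n : ℝ) : ℂ) • A)).comp P) ^ n) x = 0 :=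
      fun n => Subsingleton.elim _ _
    rw [show (fun n : ℕ =>
        (((NormedSpace.exp (((t / n : ℝ) : ℂ) • A)).comp P) ^ n) x)
        = fun _ : ℕ => (0 : X) from funext h]
    exact tendsto_const_nhds
  · have hPm : P * P = P := hP
    set B : X →L[ℂ] X := P * A * P with hB
    have hBP : B * P = B := by rw [hB]; simp only [mul_assoc, hPm]
    have hPB : P * B = B := by rw [hB]; simp only [← mul_assoc, hPm]
    set L : X →L[ℂ] X := NormedSpace.exp ((t : ℂ) • B) * P with hL
    refine ⟨L x, ?_⟩
    suffices hop : Tendsto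
        (fun n : ℕ => (NormedSpace.exp (((t / n : ℝ) : ℂ) • A) * P) ^ n)
        atTop (𝓝 L) by
      exact ((ContinuousLinearMap.apply ℂ X x).continuous.tendsto L).comp hop
    -- abbreviations
    set c : ℕ → ℂ := fun n => ((t / n : ℝ) : ℂ) with hc
    set E : ℕ → (X →L[ℂ] X) := fun n => NormedSpace.exp (c n • A) with hEdef
    set W : ℕ → (X →L[ℂ] X) := fun n => P * E n * P with hWdef
    set V : ℕ → (X →L[ℂ] X) := fun n => NormedSpace.exp (c n • B) * P with hVdef
    set MA : ℝ := Real.exp (t * ‖A‖) with hMA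
    set Mv : ℝ := 1 + ‖P‖ * Real.exp (t * ‖B‖) with hMv
    set K : ℝ := ‖P‖ ^ 2 * ‖A‖ ^ 2 * Real.exp (t * ‖A‖)
      + ‖P‖ * ‖B‖ ^ 2 * Real.exp (t * ‖B‖) with hK
    have hMv1 : (1 : ℝ) ≤ Mv := le_add_of_nonneg_right (by positivity)
    have hMv0 : (0 : ℝ) ≤ Mv := le_trans zero_le_one hMv1
    have hK0 : (0 : ℝ) ≤ K := by rw [hK]; positivity
    have hMA0 : (0 : ℝ) ≤ MA := (Real.exp_pos _).le
    have hcn : ∀ n : ℕ, 1 ≤ n → ‖c n‖ = t / n ∧ 0 ≤ t / n ∧ t / n ≤ t := by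
      intro n hn
      have h0 : 0 ≤ t / n := div_nonneg ht (Nat.cast_nonneg n)
      refine ⟨?_, h0, div_le_self ht (by exact_mod_cast hn)⟩
      simp only [hc]
      rw [Complex.norm_real]
      exact Real.norm_of_nonneg h0
    have hE : ∀ n : ℕ, 1 ≤ n → ‖E n‖ ≤ MA := by
      intro n hn
      obtain ⟨h1, h2, h3⟩ := hcn n hn
      refine (myNormExpLe _).trans (Real.exp_le_exp.2 ?_)
      have hns : ‖c n • A‖ = ‖c n‖ * ‖A‖ := norm_smul (c n) A
      rw [hns, h1]
      exact mul_le_mul_of_nonneg_right h3 (norm_nonneg A)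
    have hVpow : ∀ n j : ℕ,
        V n ^ (j + 1) = NormedSpace.exp ((((j : ℂ) + 1) * c n) • B) * P := by
      intro n j
      simp only [hVdef]
      exact myExpPow hPm hBP hPB (c n) j
    have hv : ∀ n : ℕ, 1 ≤ n → ∀ j, j ≤ n - 1 → ‖V n ^ j‖ ≤ Mv := by
      intro n hn j hj
      match j with
      | 0 => simpa using hMv1
      | (m + 1) =>
        rw [hVpow n m]
        obtain ⟨h1, h2, h3⟩ := hcn n hn
        refine (norm_mul_le _ _).trans ?_
        have hb : ‖NormedSpace.exp ((((m : ℂ) + 1) * c n) • B)‖ ≤ Real.exp (t * ‖B‖) := by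
          refine (myNormExpLe _).trans (Real.exp_le_exp.2 ?_)
          have hns : ‖(((m : ℂ) + 1) * c n) • B‖ = ‖((m : ℂ) + 1) * c n‖ * ‖B‖ :=
            norm_smul (((m : ℂ) + 1) * c n) B
          rw [hns, norm_mul, h1]
          have hm : ‖((m : ℂ) + 1)‖ = (m + 1 : ℝ) := by
            rw [show ((m : ℂ) + 1) = ((m + 1 : ℕ) : ℂ) by push_cast; ring,
              Complex.norm_natCast]
            push_cast; ring
          rw [hm]
          have hmn : (m + 1 : ℝ) ≤ (n : ℝ) := by
            have : m + 1 ≤ n := by omega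
            exact_mod_cast this
          have hnn : (0 : ℝ) < n := by exact_mod_cast hn
          have hfn : (m + 1 : ℝ) * (t / n) ≤ t := by
            calc (m + 1 : ℝ) * (t / n) ≤ (n : ℝ) * (t / n) :=
                  mul_le_mul_of_nonneg_right hmn h2
              _ = t := by field_simp
          exact mul_le_mul_of_nonneg_right hfn (norm_nonneg B)
        calc ‖NormedSpace.exp ((((m : ℂ) + 1) * c n) • B)‖ * ‖P‖
            ≤ Real.exp (t * ‖B‖) * ‖P‖ := mul_le_mul_of_nonneg_right hb (norm_nonneg P)
          _ ≤ Mv := by rw [hMv, mul_comm]; linarith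
    have hkey : ∀ n : ℕ, 1 ≤ n → ‖W n ^ (n - 1) - V n ^ (n - 1)‖
        ≤ Mv * (Real.exp (Mv * K * t ^ 2 / n) - 1) := by
      intro n hn
      obtain ⟨h1, h2, h3⟩ := hcn n hn
      have hnn : (0 : ℝ) < n := by exact_mod_cast hn
      have hRA : ‖NormedSpace.exp (c n • A) - 1 - c n • A‖
          ≤ (t / n) ^ 2 * (‖A‖ ^ 2 * Real.exp (t * ‖A‖)) := by
        refine (myExpRemainder _).trans ?_
        have hns : ‖c n • A‖ = ‖c n‖ * ‖A‖ := norm_smul (c n) A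
        rw [hns, h1]
        calc (t / n * ‖A‖) ^ 2 * Real.exp (t / n * ‖A‖)
            ≤ (t / n * ‖A‖) ^ 2 * Real.exp (t * ‖A‖) := by
              have := mul_le_mul_of_nonneg_right h3 (norm_nonneg A)
              exact mul_le_mul_of_nonneg_left (Real.exp_le_exp.2 this) (by positivity)
          _ = (t / n) ^ 2 * (‖A‖ ^ 2 * Real.exp (t * ‖A‖)) := by ring
      have hRB : ‖NormedSpace.exp (c n • B) - 1 - c n • B‖
          ≤ (t / n) ^ 2 * (‖B‖ ^ 2 * Real.exp (t * ‖B‖)) := by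
        refine (myExpRemainder _).trans ?_
        have hns : ‖c n • B‖ = ‖c n‖ * ‖B‖ := norm_smul (c n) B
        rw [hns, h1]
        calc (t / n * ‖B‖) ^ 2 * Real.exp (t / n * ‖B‖)
            ≤ (t / n * ‖B‖) ^ 2 * Real.exp (t * ‖B‖) := by
              have := mul_le_mul_of_nonneg_right h3 (norm_nonneg B)
              exact mul_le_mul_of_nonneg_left (Real.exp_le_exp.2 this) (by positivity)
          _ = (t / n) ^ 2 * (‖B‖ ^ 2 * Real.exp (t * ‖B‖)) := by ring
      have hu : P * (c n • A) * P = (c n • B) * P := by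
        have a1 : P * (c n • A) = c n • (P * A) := mul_smul_comm (c n) P A
        have a2 : (c n • (P * A)) * P = c n • (P * A * P) := smul_mul_assoc (c n) (P * A) P
        have a3 : (c n • B) * P = c n • (B * P) := smul_mul_assoc (c n) B P
        rw [a1, a2, a3, hBP, hB]
      have h2' : P * (1 + c n • A) * P = (1 + c n • B) * P := by
        rw [mul_add, mul_one, add_mul, hPm, add_mul, one_mul, hu]
      have hWV : W n - V n
          = P * (NormedSpace.exp (c n • A) - 1 - c n • A) * P
            - (NormedSpace.exp (c n • B) - 1 - c n • B) * P := by
        have e1 : NormedSpace.exp (c n • A)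
            = (NormedSpace.exp (c n • A) - 1 - c n • A) + (1 + c n • A) := by abel
        have e1' : NormedSpace.exp (c n • B)
            = (NormedSpace.exp (c n • B) - 1 - c n • B) + (1 + c n • B) := by abel
        simp only [hWdef, hVdef, hEdef]
        calc P * NormedSpace.exp (c n • A) * P - NormedSpace.exp (c n • B) * P
            = P * ((NormedSpace.exp (c n • A) - 1 - c n • A) + (1 + c n • A)) * P
              - ((NormedSpace.exp (c n • B) - 1 - c n • B) + (1 + c n • B)) * P := by
              rw [← e1, ← e1']
          _ = (P * (NormedSpace.exp (c n • A) - 1 - c n • A) * P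
                + P * (1 + c n • A) * P)
              - ((NormedSpace.exp (c n • B) - 1 - c n • B) * P
                + (1 + c n • B) * P) := by noncomm_ring
          _ = P * (NormedSpace.exp (c n • A) - 1 - c n • A) * P
              - (NormedSpace.exp (c n • B) - 1 - c n • B) * P := by
              rw [h2']; abel
      have hdWV : ‖W n - V n‖ ≤ (t / n) ^ 2 * K := by
        rw [hWV]
        refine (norm_sub_le _ _).trans ?_
        have t1 : ‖P * (NormedSpace.exp (c n • A) - 1 - c n • A) * P‖
            ≤ ‖P‖ * ((t / n) ^ 2 * (‖A‖ ^ 2 * Real.exp (t * ‖A‖))) * ‖P‖ := by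
          refine (norm_mul₃_le).trans ?_
          have := mul_le_mul_of_nonneg_left hRA (norm_nonneg P)
          exact mul_le_mul_of_nonneg_right this (norm_nonneg P)
        have t2 : ‖(NormedSpace.exp (c n • B) - 1 - c n • B) * P‖
            ≤ ((t / n) ^ 2 * (‖B‖ ^ 2 * Real.exp (t * ‖B‖))) * ‖P‖ := by
          refine (norm_mul_le _ _).trans ?_
          exact mul_le_mul_of_nonneg_right hRB (norm_nonneg P)
        calc ‖P * (NormedSpace.exp (c n • A) - 1 - c n • A) * P‖
              + ‖(NormedSpace.exp (c n • B) - 1 - c n • B) * P‖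
            ≤ ‖P‖ * ((t / n) ^ 2 * (‖A‖ ^ 2 * Real.exp (t * ‖A‖))) * ‖P‖
              + ((t / n) ^ 2 * (‖B‖ ^ 2 * Real.exp (t * ‖B‖))) * ‖P‖ := add_le_add t1 t2
          _ = (t / n) ^ 2 * K := by rw [hK]; ring
      have h4 := myPowDiff (W n) (V n) Mv (n - 1) (hv n hn)
      refine h4.trans ?_
      have hx : (0 : ℝ) ≤ Mv * ((t / n) ^ 2 * K) :=
        mul_nonneg hMv0 (mul_nonneg (by positivity) hK0)
      have s1 : (1 + Mv * ‖W n - V n‖) ^ (n - 1)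
          ≤ (1 + Mv * ((t / n) ^ 2 * K)) ^ (n - 1) := by
        apply pow_le_pow_left₀
          (add_nonneg zero_le_one (mul_nonneg hMv0 (norm_nonneg _)))
        have := mul_le_mul_of_nonneg_left hdWV hMv0
        linarith
      have s2 : (1 + Mv * ((t / n) ^ 2 * K)) ^ (n - 1)
          ≤ Real.exp (Mv * K * t ^ 2 / n) := by
        calc (1 + Mv * ((t / n) ^ 2 * K)) ^ (n - 1)
            ≤ (Real.exp (Mv * ((t / n) ^ 2 * K))) ^ (n - 1) := by
              apply pow_le_pow_left₀ (add_nonneg zero_le_one hx)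
              have := Real.add_one_le_exp (Mv * ((t / n) ^ 2 * K))
              linarith
          _ = Real.exp (((n - 1 : ℕ) : ℝ) * (Mv * ((t / n) ^ 2 * K))) := by
              rw [← Real.exp_nat_mul]
          _ ≤ Real.exp (Mv * K * t ^ 2 / n) := by
              apply Real.exp_le_exp.2
              have hcast : ((n - 1 : ℕ) : ℝ) ≤ (n : ℝ) := by
                exact_mod_cast Nat.sub_le n 1
              calc ((n - 1 : ℕ) : ℝ) * (Mv * ((t / n) ^ 2 * K))
                  ≤ (n : ℝ) * (Mv * ((t / n) ^ 2 * K)) :=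
                    mul_le_mul_of_nonneg_right hcast hx
                _ = Mv * K * t ^ 2 / n := by field_simp
      have s3 : (1 + Mv * ‖W n - V n‖) ^ (n - 1) - 1
          ≤ Real.exp (Mv * K * t ^ 2 / n) - 1 := by
        have := s1.trans s2
        linarith
      exact mul_le_mul_of_nonneg_left s3 hMv0
    have hsplit : ∀ n : ℕ, 1 ≤ n → (E n * P) ^ n = E n * W n ^ (n - 1) * P := by
      intro n hn
      obtain ⟨m, rfl⟩ : ∃ m, n = m + 1 := ⟨n - 1, by omega⟩
      simp only [Nat.add_sub_cancel, hWdef]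
      exact myPowSplit hPm m
    have hG : ∀ n : ℕ, 1 ≤ n → E n * V n ^ (n - 1) * P
        = E n * NormedSpace.exp (((t - t / n : ℝ) : ℂ) • B) * P := by
      intro n hn
      match n, hn with
      | 1, _ =>
        norm_num [NormedSpace.exp_zero]
      | (m + 2), _ =>
        rw [show m + 2 - 1 = m + 1 from rfl, hVpow (m + 2) m]
        have hne : ((m : ℂ) + 2) ≠ 0 := by
          have : ((m + 2 : ℕ) : ℂ) ≠ 0 := Nat.cast_ne_zero.2 (by omega)
          push_cast at this
          convert this using 2 <;> norm_num
        have hsc : (((m : ℂ) + 1) * c (m + 2)) = (((t - t / (m + 2) : ℝ)) : ℂ) := by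
          simp only [hc]
          push_cast
          field_simp
          ring
        rw [hsc]
        have hc2 : (((t - t / ((m : ℝ) + 2) : ℝ)) : ℂ)
            = (((t - t / (((m + 2 : ℕ)) : ℝ) : ℝ)) : ℂ) := by push_cast; ring
        rw [hc2]
        simp only [mul_assoc, hPm]
    -- limits
    have ht0 : Tendsto (fun n : ℕ => t / (n : ℝ)) atTop (𝓝 0) :=
      tendsto_const_div_atTop_nhds_zero_nat t
    have hcA : Tendsto (fun n : ℕ => c n • A) atTop (𝓝 0) := by
      have h1 : Tendsto c atTop (𝓝 0) := by
        have h := (Complex.continuous_ofReal.tendsto (0 : ℝ)).comp ht0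
        simp only [Complex.ofReal_zero] at h
        exact h
      simpa using h1.smul_const A
    have hE1 : Tendsto E atTop (𝓝 1) := by
      letI : NormedAlgebra ℚ (X →L[ℂ] X) := .restrictScalars ℚ ℂ (X →L[ℂ] X)
      have := ((NormedSpace.exp_continuous
        (𝔸 := X →L[ℂ] X)).tendsto 0).comp hcA
      simpa [hEdef, Function.comp_def, NormedSpace.exp_zero] using this
    have hθ : Tendsto (fun n : ℕ => (((t - t / n : ℝ) : ℂ)) • B) atTop (𝓝 ((t : ℂ) • B)) := by
      have h1 : Tendsto (fun n : ℕ => (t - t / n : ℝ)) atTop (𝓝 t) := by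
        have := (tendsto_const_nhds (x := t) (f := atTop (α := ℕ))).sub ht0
        simpa using this
      have h2 := (Complex.continuous_ofReal.tendsto t).comp h1
      exact Tendsto.smul_const h2 B
    have hH : Tendsto (fun n : ℕ => E n * NormedSpace.exp (((t - t / n : ℝ) : ℂ) • B) * P)
        atTop (𝓝 L) := by
      letI : NormedAlgebra ℚ (X →L[ℂ] X) := .restrictScalars ℚ ℂ (X →L[ℂ] X)
      have h2 := ((NormedSpace.exp_continuous
        (𝔸 := X →L[ℂ] X)).tendsto ((t : ℂ) • B)).comp hθ
      have h3 := (hE1.mul h2).mul_const P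
      simpa [hL, Function.comp] using h3
    have hbnd : Tendsto
        (fun n : ℕ => MA * (Mv * (Real.exp (Mv * K * t ^ 2 / (n : ℝ)) - 1)) * ‖P‖)
        atTop (𝓝 0) := by
      have h1 : Tendsto (fun n : ℕ => Mv * K * t ^ 2 / (n : ℝ)) atTop (𝓝 0) :=
        tendsto_const_div_atTop_nhds_zero_nat _
      have h2 := (Real.continuous_exp.tendsto 0).comp h1
      have h3 : Tendsto (fun n : ℕ => Real.exp (Mv * K * t ^ 2 / (n : ℝ)) - 1)
          atTop (𝓝 0) := by
        have := h2.sub_const 1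
        simpa [Function.comp] using this
      have h4 := ((h3.const_mul Mv).const_mul MA).mul_const ‖P‖
      simpa using h4
    have hdiff : Tendsto
        (fun n : ℕ => (E n * P) ^ n
          - E n * NormedSpace.exp (((t - t / n : ℝ) : ℂ) • B) * P) atTop (𝓝 0) := by
      apply squeeze_zero_norm' ?_ hbnd
      filter_upwards [eventually_ge_atTop 1] with n hn
      have e1 : (E n * P) ^ n - E n * NormedSpace.exp (((t - t / n : ℝ) : ℂ) • B) * P
          = E n * (W n ^ (n - 1) - V n ^ (n - 1)) * P := by
        rw [hsplit n hn, ← hG n hn, mul_sub, sub_mul]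
      rw [e1]
      have hnonneg : (0 : ℝ) ≤ Mv * (Real.exp (Mv * K * t ^ 2 / (n : ℝ)) - 1) := by
        have hx0 : (0 : ℝ) ≤ Mv * K * t ^ 2 / n :=
          div_nonneg (mul_nonneg (mul_nonneg hMv0 hK0) (sq_nonneg t)) (Nat.cast_nonneg n)
        have := Real.one_le_exp hx0
        have : (0:ℝ) ≤ Real.exp (Mv * K * t ^ 2 / (n:ℝ)) - 1 := by linarith
        exact mul_nonneg hMv0 this
      calc ‖E n * (W n ^ (n - 1) - V n ^ (n - 1)) * P‖
          ≤ ‖E n‖ * ‖W n ^ (n - 1) - V n ^ (n - 1)‖ * ‖P‖ := norm_mul₃_le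
        _ ≤ MA * (Mv * (Real.exp (Mv * K * t ^ 2 / (n : ℝ)) - 1)) * ‖P‖ := by
            refine mul_le_mul_of_nonneg_right ?_ (norm_nonneg P)
            exact mul_le_mul (hE n hn) (hkey n hn) (norm_nonneg _) hMA0
    have hfinal : Tendsto (fun n : ℕ => (E n * P) ^ n) atTop (𝓝 L) := by
      have := hdiff.add hH
      simp only [zero_add] at this
      refine this.congr fun n => ?_
      abel
    exact hfinal
end

section
/- Let A be the generator of a C₀-semigroup (e^{tA})_{t≥0} on a complex Banach space X, and assume A is unbounded. Then there exist a bounded rank-one projection P on X and a vector y ∈ X such that the sequence (e^{(1/n)A} P)^n y does not converge, not even weakly, as n → ∞. Moreover P can be taken of the form Pz = φ(z)y for a suitable φ ∈ X* with φ(y) = 1. -/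
open Filter Topology

/-- A C₀-semigroup on a complex normed space `X`: a strongly continuous map
`T : [0,∞) → B(X)` with `T 0 = I` and `T (s+t) = T s ∘ T t`. -/
structure C0Semigroup (X : Type*) [NormedAddCommGroup X] [NormedSpace ℂ X] where
  T : ℝ → X →L[ℂ] X
  T_zero : T 0 = 1
  T_add : ∀ s t : ℝ, 0 ≤ s → 0 ≤ t → T (s + t) = (T s).comp (T t)
  T_cont : ∀ x : X, ContinuousOn (fun t => T t x) (Set.Ici (0 : ℝ))

namespace Stmt2Aux

variable {X : Type*} [NormedAddCommGroup X] [NormedSpace ℂ X] [CompleteSpace X]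

/-- The discrete difference-quotient operator `n (T(1/n) - I)`. -/
noncomputable def bop (Sg : C0Semigroup X) (n : ℕ) : X →L[ℂ] X :=
  (n : ℂ) • (Sg.T (1 / (n:ℝ)) - 1)

lemma bop_apply (Sg : C0Semigroup X) (n : ℕ) (x : X) :
    bop Sg n x = (n:ℂ) • (Sg.T (1/(n:ℝ)) x - x) := by
  simp [bop]

lemma T_tendsto_zero (Sg : C0Semigroup X) (y : X) :
    Tendsto (fun t : ℝ => Sg.T t y) (𝓝[Set.Ici (0:ℝ)] 0) (𝓝 y) := by
  have h := (Sg.T_cont y) 0 (by simp)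
  have : Sg.T 0 y = y := by rw [Sg.T_zero]; rfl
  simpa [ContinuousWithinAt, this] using h

lemma T_seq_tendsto (Sg : C0Semigroup X) (y : X) {ν : ℕ → ℕ}
    (hν : Tendsto ν atTop atTop) :
    Tendsto (fun k => Sg.T (1/(ν k : ℝ)) y) atTop (𝓝 y) := by
  apply (T_tendsto_zero Sg y).comp
  apply tendsto_nhdsWithin_of_tendsto_nhds_of_eventually_within
  · exact (tendsto_one_div_atTop_nhds_zero_nat).comp hν
  · filter_upwards with k using Set.mem_Ici.mpr (by positivity)

lemma pow_formula (Sg : C0Semigroup X) (φ : X →L[ℂ] ℂ) (Y : X) (hφY : φ Y = 1)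
    (n : ℕ) (k : ℕ) :
    (((Sg.T (1/(n:ℝ))).comp (φ.smulRight Y)) ^ (k+1)) Y
      = (φ (Sg.T (1/(n:ℝ)) Y))^k • (Sg.T (1/(n:ℝ)) Y) := by
  induction k with
  | zero => simp [hφY]
  | succ k ih =>
      rw [pow_succ', ContinuousLinearMap.mul_apply, ih]
      simp [smul_smul, pow_succ, mul_comm]

lemma pow_formula' (Sg : C0Semigroup X) (φ : X →L[ℂ] ℂ) (Y : X) (hφY : φ Y = 1)
    {n : ℕ} (hn : 1 ≤ n) :
    (((Sg.T (1/(n:ℝ))).comp (φ.smulRight Y)) ^ n) Y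
      = (φ (Sg.T (1/(n:ℝ)) Y))^(n-1) • (Sg.T (1/(n:ℝ)) Y) := by
  obtain ⟨k, rfl⟩ : ∃ k, n = k + 1 := ⟨n-1, by omega⟩
  simpa using pow_formula Sg φ Y hφY (k+1) k

lemma not_weak_conv (Sg : C0Semigroup X) (φ : X →L[ℂ] ℂ) (Y : X) (hφY : φ Y = 1)
    (ν : ℕ → ℕ) (hν : Tendsto ν atTop atTop) (hν1 : ∀ k, 1 ≤ ν k)
    (hre : Tendsto (fun k => (φ (bop Sg (ν k) Y)).re) atTop atTop) :
    ¬ ∃ z : X, ∀ ψ : X →L[ℂ] ℂ,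
        Tendsto (fun n : ℕ => ψ ((((Sg.T (1 / n)).comp (φ.smulRight Y)) ^ n) Y))
          atTop (𝓝 (ψ z)) := by
  rintro ⟨z, hz⟩
  set w : ℕ → ℂ := fun n => φ (Sg.T (1/(n:ℝ)) Y) with hw
  -- real part identity
  have hsre : ∀ n : ℕ, (φ (bop Sg n Y)).re = n * ((w n).re - 1) := by
    intro n
    rw [bop_apply]
    simp [hw, hφY, Complex.smul_re, map_sub]
  -- eventually the real parts are ≥ 0 and ν k ≥ 2
  have hev : ∀ᶠ k in atTop, 0 ≤ (φ (bop Sg (ν k) Y)).re ∧ 2 ≤ ν k := by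
    filter_upwards [hre.eventually_ge_atTop 0, hν.eventually_ge_atTop 2] with k h1 h2
    exact ⟨h1, h2⟩
  -- norm lower bound for w^(ν k - 1)
  have hlow : ∀ᶠ k in atTop,
      1 + (φ (bop Sg (ν k) Y)).re / 2 ≤ ‖w (ν k) ^ (ν k - 1)‖ := by
    filter_upwards [hev] with k ⟨h0, h2⟩
    set n := ν k
    set r := (φ (bop Sg n Y)).re with hrdef
    have hn0 : (0:ℝ) < n := by positivity
    have hwre : (w n).re = 1 + r / n := by
      have := hsre n
      field_simp at this ⊢
      linarith
    have h1 : (1 : ℝ) + r / n ≤ ‖w n‖ := by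
      calc (1:ℝ) + r / n = (w n).re := hwre.symm
      _ ≤ ‖w n‖ := Complex.re_le_norm _
    have hrn : (0:ℝ) ≤ r / n := by positivity
    have hb : 1 + ((n - 1 : ℕ):ℝ) * (r / n) ≤ (1 + r/n) ^ (n-1 : ℕ) :=
      one_add_mul_le_pow (by linarith) _
    have hp : (1 + r/n) ^ (n-1:ℕ) ≤ ‖w n‖ ^ (n-1:ℕ) :=
      pow_le_pow_left₀ (by positivity) h1 _
    rw [norm_pow]
    refine le_trans ?_ (le_trans hb hp)
    have hhalf : (1:ℝ)/2 ≤ ((n:ℝ) - 1) / n := by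
      rw [div_le_div_iff₀ (by norm_num) hn0]
      have : (2:ℝ) ≤ n := by exact_mod_cast h2
      linarith
    have hcast : ((n - 1 : ℕ) : ℝ) = (n:ℝ) - 1 := by
      have : 1 ≤ n := le_trans (by norm_num) h2
      push_cast [this]; ring
    have : r / 2 ≤ ((n-1:ℕ):ℝ) * (r / n) := by
      rw [hcast]
      calc r / 2 = ((1:ℝ)/2) * r := by ring
      _ ≤ (((n:ℝ)-1)/n) * r := by
          apply mul_le_mul_of_nonneg_right hhalf h0
      _ = ((n:ℝ)-1) * (r/n) := by ring
    linarith
  have hA : Tendsto (fun k => ‖w (ν k) ^ (ν k - 1)‖) atTop atTop := by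
    apply tendsto_atTop_mono' _ hlow
    have : Tendsto (fun k => (φ (bop Sg (ν k) Y)).re / 2) atTop atTop :=
      hre.atTop_div_const (by norm_num)
    exact tendsto_atTop_add_const_left _ 1 this
  -- every functional kills Y
  have key : ∀ ψ : X →L[ℂ] ℂ, ψ Y = 0 := by
    intro ψ
    have h1 : Tendsto (fun k => ψ ((((Sg.T (1 / (ν k : ℕ))).comp (φ.smulRight Y)) ^ (ν k)) Y))
        atTop (𝓝 (ψ z)) := (hz ψ).comp hν
    have hEq : ∀ᶠ k in atTop,
        ψ ((((Sg.T (1 / (ν k : ℕ))).comp (φ.smulRight Y)) ^ (ν k)) Y)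
          = w (ν k) ^ (ν k - 1) * ψ (Sg.T (1/(ν k : ℝ)) Y) := by
      filter_upwards with k
      rw [pow_formula' Sg φ Y hφY (hν1 k)]
      simp [hw, smul_eq_mul]
    -- inverse tendsto 0
    have hinv : Tendsto (fun k => (w (ν k) ^ (ν k - 1))⁻¹) atTop (𝓝 0) := by
      rw [tendsto_zero_iff_norm_tendsto_zero]
      simp only [norm_inv]
      exact hA.inv_tendsto_atTop
    have h2 : Tendsto (fun k => ψ ((((Sg.T (1 / (ν k : ℕ))).comp (φ.smulRight Y)) ^ (ν k)) Y)
        * (w (ν k) ^ (ν k - 1))⁻¹) atTop (𝓝 (ψ z * 0)) := h1.mul hinv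
    have h3 : Tendsto (fun k => ψ (Sg.T (1/(ν k : ℝ)) Y)) atTop (𝓝 0) := by
      rw [show (0:ℂ) = ψ z * 0 by ring]
      apply h2.congr'
      filter_upwards [hEq, hA.eventually_ge_atTop 1] with k hk hk1
      rw [hk]
      have hne : w (ν k) ^ (ν k - 1) ≠ 0 := by
        intro h
        rw [h] at hk1; simp at hk1; linarith
      field_simp
    have h4 : Tendsto (fun k => ψ (Sg.T (1/(ν k : ℝ)) Y)) atTop (𝓝 (ψ Y)) :=
      (ψ.continuous.tendsto Y).comp (T_seq_tendsto Sg Y hν)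
    exact tendsto_nhds_unique h4 h3
  have := key φ
  rw [hφY] at this
  exact one_ne_zero this

open MeasureTheory intervalIntegral in
lemma T_intable (Sg : C0Semigroup X) (w : X) {a b : ℝ} (ha : 0 ≤ a) (hb : 0 ≤ b) :
    IntervalIntegrable (fun s => Sg.T s w) volume a b := by
  apply ContinuousOn.intervalIntegrable
  apply (Sg.T_cont w).mono
  rw [Set.uIcc_eq_union]
  rintro x (hx | hx)
  · exact le_trans ha hx.1
  · exact le_trans hb hx.1

open MeasureTheory intervalIntegral in
/-- the averaging vector `∫_0^δ T(s) w ds`. -/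
noncomputable def xint (Sg : C0Semigroup X) (w : X) (δ : ℝ) : X :=
  ∫ s in (0:ℝ)..δ, Sg.T s w

open MeasureTheory intervalIntegral in
lemma bop_xint_bound (Sg : C0Semigroup X) (w : X) {δ : ℝ} (hδ : δ ∈ Set.Ioc (0:ℝ) 1) :
    ∃ K, 0 ≤ K ∧ ∀ n : ℕ, ‖bop Sg n (xint Sg w δ)‖ ≤ K := by
  obtain ⟨M, hM⟩ := (isCompact_Icc (a := (0:ℝ)) (b := 2)).exists_bound_of_continuousOn
      ((Sg.T_cont w).mono (by intro x hx; exact hx.1))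
  have hδ0 : 0 < δ := hδ.1
  have hδ1 : δ ≤ 1 := hδ.2
  have hM0 : 0 ≤ M := le_trans (norm_nonneg _) (hM 0 (by norm_num))
  refine ⟨2 * M, by positivity, fun n => ?_⟩
  rcases Nat.eq_zero_or_pos n with rfl | hn
  · simp [bop_apply]; positivity
  have hh0 : 0 < 1/(n:ℝ) := by positivity
  have hh1 : 1/(n:ℝ) ≤ 1 := by
    rw [div_le_one (by positivity)]; exact_mod_cast hn
  set h : ℝ := 1/(n:ℝ) with hdef
  -- T(h) applied to the integral
  have key : Sg.T h (xint Sg w δ) = ∫ s in h..(δ+h), Sg.T s w := by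
    rw [xint, ← ContinuousLinearMap.intervalIntegral_comp_comm _ (T_intable Sg w le_rfl hδ0.le)]
    rw [show (∫ s in (0:ℝ)..δ, Sg.T h (Sg.T s w)) = ∫ s in (0:ℝ)..δ, Sg.T (h + s) w from ?_]
    · rw [intervalIntegral.integral_comp_add_left (fun s => Sg.T s w) h]
      norm_num [add_comm]
    · apply intervalIntegral.integral_congr
      intro s hs
      rw [Set.uIcc_of_le hδ0.le] at hs
      show Sg.T h (Sg.T s w) = Sg.T (h + s) w
      rw [Sg.T_add h s hh0.le hs.1]
      rfl
  have split1 : (∫ s in h..(δ+h), Sg.T s w) = (∫ s in h..δ, Sg.T s w) + ∫ s in δ..(δ+h), Sg.T s w :=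
    (integral_add_adjacent_intervals (T_intable Sg w hh0.le hδ0.le)
      (T_intable Sg w hδ0.le (by positivity))).symm
  have split2 : xint Sg w δ = (∫ s in (0:ℝ)..h, Sg.T s w) + ∫ s in h..δ, Sg.T s w :=
    (integral_add_adjacent_intervals (T_intable Sg w le_rfl hh0.le)
      (T_intable Sg w hh0.le hδ0.le)).symm
  have hdiff : Sg.T h (xint Sg w δ) - xint Sg w δ
      = (∫ s in δ..(δ+h), Sg.T s w) - ∫ s in (0:ℝ)..h, Sg.T s w := by
    rw [key, split1]; rw [split2]; abel
  have hb1 : ‖∫ s in δ..(δ+h), Sg.T s w‖ ≤ M * h := by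
    have := norm_integral_le_of_norm_le_const (C := M) (a := δ) (b := δ+h)
      (f := fun s => Sg.T s w) ?_
    · calc ‖∫ s in δ..(δ+h), Sg.T s w‖ ≤ M * |δ + h - δ| := this
      _ = M * h := by rw [show δ + h - δ = h by ring, abs_of_pos hh0]
    · intro x hx
      rw [Set.uIoc_of_le (by linarith)] at hx
      exact hM x ⟨le_trans hδ0.le hx.1.le, by nlinarith [hx.2]⟩
  have hb2 : ‖∫ s in (0:ℝ)..h, Sg.T s w‖ ≤ M * h := by
    have := norm_integral_le_of_norm_le_const (C := M) (a := (0:ℝ)) (b := h)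
      (f := fun s => Sg.T s w) ?_
    · calc ‖∫ s in (0:ℝ)..h, Sg.T s w‖ ≤ M * |h - 0| := this
      _ = M * h := by rw [show h - 0 = h by ring, abs_of_pos hh0]
    · intro x hx
      rw [Set.uIoc_of_le (by linarith)] at hx
      exact hM x ⟨hx.1.le, by linarith [hx.2]⟩
  rw [bop_apply]
  rw [norm_smul]
  calc ‖(n:ℂ)‖ * ‖Sg.T (1/(n:ℝ)) (xint Sg w δ) - xint Sg w δ‖
      ≤ (n:ℝ) * (M * h + M * h) := by
        apply mul_le_mul_of_nonneg ?_ ?_ (norm_nonneg _) (by positivity)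
        · simp
        · rw [← hdef, hdiff]
          exact le_trans (norm_sub_le _ _) (add_le_add hb1 hb2)
  _ = 2 * M * ((n:ℝ) * h) := by ring
  _ = 2 * M := by
        rw [hdef]
        field_simp

open MeasureTheory intervalIntegral in
lemma xint_approx (Sg : C0Semigroup X) (w : X) {ε : ℝ} (hε : 0 < ε) :
    ∃ δ : ℝ, δ ∈ Set.Ioc (0:ℝ) 1 ∧ ‖δ⁻¹ • xint Sg w δ - w‖ ≤ ε := by
  have hc := T_tendsto_zero Sg w
  rw [Metric.tendsto_nhdsWithin_nhds] at hc
  obtain ⟨r, hr0, hr⟩ := hc (ε/2) (by positivity)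
  set δ : ℝ := min (r/2) 1 with hδdef
  have hδ0 : 0 < δ := by positivity
  have hδ1 : δ ≤ 1 := min_le_right _ _
  refine ⟨δ, ⟨hδ0, hδ1⟩, ?_⟩
  have hint : IntervalIntegrable (fun s => Sg.T s w) volume 0 δ := T_intable Sg w le_rfl hδ0.le
  have hconst : IntervalIntegrable (fun _ : ℝ => w) volume 0 δ := intervalIntegrable_const
  have hxw : xint Sg w δ - δ • w = ∫ s in (0:ℝ)..δ, (Sg.T s w - w) := by
    rw [intervalIntegral.integral_sub hint hconst, intervalIntegral.integral_const]
    simp [xint]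
  have hbnd : ‖xint Sg w δ - δ • w‖ ≤ (ε/2) * |δ - 0| := by
    rw [hxw]
    apply intervalIntegral.norm_integral_le_of_norm_le_const
    intro x hx
    rw [Set.uIoc_of_le hδ0.le] at hx
    have hxr : dist x 0 < r := by
      rw [Real.dist_eq, sub_zero, abs_of_pos hx.1]
      calc x ≤ δ := hx.2
      _ ≤ r/2 := min_le_left _ _
      _ < r := by linarith
    have := hr (Set.mem_Ici.mpr hx.1.le) hxr
    rw [dist_eq_norm] at this
    exact this.le
  have : ‖δ⁻¹ • xint Sg w δ - w‖ = δ⁻¹ * ‖xint Sg w δ - δ • w‖ := by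
    rw [show δ⁻¹ • xint Sg w δ - w = δ⁻¹ • (xint Sg w δ - δ • w) by
      rw [smul_sub, smul_smul, inv_mul_cancel₀ hδ0.ne', one_smul]]
    rw [norm_smul, Real.norm_eq_abs, abs_of_pos (by positivity)]
  rw [this]
  calc δ⁻¹ * ‖xint Sg w δ - δ • w‖ ≤ δ⁻¹ * ((ε/2) * |δ - 0|) := by
        apply mul_le_mul_of_nonneg_left hbnd (by positivity)
  _ = ε / 2 := by
        rw [sub_zero, abs_of_pos hδ0]; field_simp
  _ ≤ ε := by linarith

lemma exists_target_vector (Sg : C0Semigroup X) (ψ : X →L[ℂ] ℂ) (hψ : ψ ≠ 0) (τ : ℂ) :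
    ∃ v : X, ψ v = τ ∧ ∃ K, ∀ n : ℕ, ‖ψ (bop Sg n v)‖ ≤ K := by
  rcases eq_or_ne τ 0 with rfl | hτ
  · exact ⟨0, by simp, 0, fun n => by simp [bop_apply]⟩
  have hex : ∃ δ ∈ Set.Ioc (0:ℝ) 1, ∃ w : X, ψ (xint Sg w δ) ≠ 0 := by
    by_contra hz
    push_neg at hz
    apply hψ
    ext w
    have hval : ∀ ε > (0:ℝ), ‖ψ w‖ ≤ ‖ψ‖ * ε := by
      intro ε hε
      obtain ⟨δ, hδ, happ⟩ := xint_approx Sg w hε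
      have h1 : ψ w = ψ (w - δ⁻¹ • xint Sg w δ) := by
        rw [map_sub, ContinuousLinearMap.map_smul_of_tower, hz δ hδ w, smul_zero, sub_zero]
      rw [h1]
      calc ‖ψ (w - δ⁻¹ • xint Sg w δ)‖ ≤ ‖ψ‖ * ‖w - δ⁻¹ • xint Sg w δ‖ :=
            ψ.le_opNorm _
      _ ≤ ‖ψ‖ * ε := by
            apply mul_le_mul_of_nonneg_left ?_ (norm_nonneg _)
            rw [← norm_neg]
            simpa [neg_sub] using happ
    have : ‖ψ w‖ = 0 := by
      by_contra hne
      have hpos : 0 < ‖ψ w‖ := lt_of_le_of_ne (norm_nonneg _) (Ne.symm hne)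
      have hh := hval (‖ψ w‖ / (2 * (‖ψ‖ + 1))) (by positivity)
      have hψn : 0 ≤ ‖ψ‖ := norm_nonneg _
      have ht : (0:ℝ) < 2 * (‖ψ‖ + 1) := by positivity
      have h4 : ‖ψ‖ * (‖ψ w‖ / (2 * (‖ψ‖ + 1))) < ‖ψ w‖ := by
        rw [mul_div_assoc', div_lt_iff₀ ht]
        nlinarith
      linarith
    simpa using this
  obtain ⟨δ, hδ, w, hw⟩ := hex
  set σ := ψ (xint Sg w δ) with hσ
  refine ⟨(τ / σ) • xint Sg w δ, ?_, ?_⟩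
  · rw [map_smul, smul_eq_mul, ← hσ]
    field_simp
  · obtain ⟨K, hK0, hK⟩ := bop_xint_bound Sg w hδ
    refine ⟨‖τ/σ‖ * (‖ψ‖ * K), fun n => ?_⟩
    have : bop Sg n ((τ / σ) • xint Sg w δ) = (τ/σ) • bop Sg n (xint Sg w δ) :=
      map_smul _ _ _
    rw [this, map_smul, smul_eq_mul, norm_mul]
    apply mul_le_mul_of_nonneg_left ?_ (norm_nonneg _)
    exact le_trans (ψ.le_opNorm _) (mul_le_mul_of_nonneg_left (hK n) (norm_nonneg _))

lemma exists_functional_unbounded (b : ℕ → X) (hb : ¬ ∃ K, ∀ n, ‖b n‖ ≤ K) :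
    ∃ ψ : X →L[ℂ] ℂ, ¬ ∃ K, ∀ n, ‖ψ (b n)‖ ≤ K := by
  by_contra hz
  push_neg at hz
  apply hb
  have hpt : ∀ ψ : StrongDual ℂ X, ∃ C, ∀ n : ℕ,
      ‖(NormedSpace.inclusionInDoubleDual ℂ X (b n)) ψ‖ ≤ C := by
    intro ψ
    obtain ⟨K, hK⟩ := hz ψ
    exact ⟨K, fun n => by rw [NormedSpace.dual_def]; exact hK n⟩
  obtain ⟨C, hC⟩ := banach_steinhaus hpt
  refine ⟨max C 0, fun n => ?_⟩
  apply NormedSpace.norm_le_dual_bound ℂ (b n) (le_max_right _ _)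
  intro f
  calc ‖f (b n)‖ = ‖NormedSpace.inclusionInDoubleDual ℂ X (b n) f‖ := by
        rw [NormedSpace.dual_def]
  _ ≤ ‖NormedSpace.inclusionInDoubleDual ℂ X (b n)‖ * ‖f‖ :=
        ContinuousLinearMap.le_opNorm _ _
  _ ≤ max C 0 * ‖f‖ :=
        mul_le_mul_of_nonneg_right (le_trans (hC n) (le_max_left _ _)) (norm_nonneg _)

lemma frequently_large {c : ℕ → ℂ} (hc : ¬ ∃ K, ∀ n, ‖c n‖ ≤ K) :
    ∀ K : ℝ, ∃ᶠ n in atTop, K ≤ ‖c n‖ := by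
  intro K
  rw [Filter.frequently_atTop]
  intro N
  by_contra h
  push_neg at h
  apply hc
  have hfin : BddAbove ((fun n => ‖c n‖) '' (Set.Iio N)) :=
    ((Set.finite_Iio N).image _).bddAbove
  obtain ⟨K₀, hK₀⟩ := hfin
  refine ⟨max K K₀, fun n => ?_⟩
  rcases lt_or_ge n N with h1 | h1
  · exact le_max_of_le_right (hK₀ (Set.mem_image_of_mem _ h1))
  · exact le_max_of_le_left (h n h1).le

lemma case1 (Sg : C0Semigroup X) (y : X)
    (hy : ¬ ∃ K, ∀ n : ℕ, ‖bop Sg n y‖ ≤ K) :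
    ∃ (φ : X →L[ℂ] ℂ) (Y : X), φ Y = 1 ∧
      ¬ ∃ z : X, ∀ ψ : X →L[ℂ] ℂ,
          Tendsto (fun n : ℕ => ψ ((((Sg.T (1 / n)).comp (φ.smulRight Y)) ^ n) Y))
            atTop (𝓝 (ψ z)) := by
  obtain ⟨ψ, hψu⟩ := exists_functional_unbounded (fun n => bop Sg n y) hy
  have hψ0 : ψ ≠ 0 := by
    rintro rfl
    exact hψu ⟨0, fun n => by simp⟩
  set c : ℕ → ℂ := fun n => ψ (bop Sg n y) with hc
  have hfreq := frequently_large (c := c) hψu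
  obtain ⟨e, he_mono, he⟩ := Filter.extraction_forall_of_frequently
    (P := fun K m => (K:ℝ) ≤ ‖c m‖) (fun K => hfreq K)
  have hcpos : ∀ k : ℕ, 0 < ‖c (e (k+1))‖ := fun k =>
    lt_of_lt_of_le (by positivity) (he (k+1))
  set d : ℕ → ℂ := fun k => (‖c (e (k+1))‖ : ℂ)⁻¹ * c (e (k+1)) with hd
  have hd1 : ∀ k, ‖d k‖ = 1 := by
    intro k
    have hne : ‖c (e (k+1))‖ ≠ 0 := ne_of_gt (hcpos k)
    rw [hd]
    rw [norm_mul, norm_inv, Complex.norm_real, Real.norm_eq_abs, abs_of_pos (hcpos k),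
      inv_mul_cancel₀ hne]
  obtain ⟨u, _, θ, hθ_mono, hθ⟩ := tendsto_subseq_of_bounded
    (Metric.isBounded_closedBall (x := (0:ℂ)) (r := 1))
    (fun k => by simpa [Metric.mem_closedBall, dist_eq_norm] using (hd1 k).le)
  have hu1 : ‖u‖ = 1 := by
    have h1 : Tendsto (fun k => ‖d (θ k)‖) atTop (𝓝 ‖u‖) :=
      ((continuous_norm.tendsto u).comp hθ)
    have h2 : (fun k => ‖d (θ k)‖) = fun _ => (1:ℝ) := funext fun k => hd1 (θ k)
    rw [h2] at h1
    exact tendsto_nhds_unique h1 tendsto_const_nhds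
  set μ : ℂ := (starRingEnd ℂ) u with hμ
  have hμd : Tendsto (fun k => (μ * d (θ k)).re) atTop (𝓝 1) := by
    have hcont : Continuous (fun z : ℂ => (μ * z).re) :=
      Complex.continuous_re.comp (continuous_const.mul continuous_id)
    have h1 := (hcont.tendsto u).comp hθ
    have hval : (μ * u).re = 1 := by
      rw [hμ]
      have h2 : (starRingEnd ℂ) u * u = (Complex.normSq u : ℂ) := by
        rw [mul_comm, Complex.mul_conj]
      rw [h2]
      have h3 : Complex.normSq u = 1 := by
        rw [Complex.normSq_eq_norm_sq, hu1]; norm_num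
      rw [h3]; norm_num
    rw [hval] at h1
    exact h1
  have hev2 : ∀ᶠ k in atTop, (1:ℝ)/2 ≤ (μ * d (θ k)).re :=
    hμd.eventually (eventually_ge_nhds (by norm_num))
  set τ : ℂ := 1 - μ * ψ y with hτ
  obtain ⟨v, hvτ, Kv, hKv⟩ := exists_target_vector Sg ψ hψ0 τ
  set Y : X := μ • y + v with hY
  have hφY : ψ Y = 1 := by
    rw [hY, map_add, map_smul, hvτ, hτ, smul_eq_mul]; ring
  set ν : ℕ → ℕ := fun k => e (θ k + 1) with hν
  have hν_mono : StrictMono ν := fun a b hab => he_mono (by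
    have := hθ_mono hab; omega)
  have hν_tendsto : Tendsto ν atTop atTop := hν_mono.tendsto_atTop
  have hν1 : ∀ k, 1 ≤ ν k := fun k =>
    le_trans (Nat.le_add_left 1 (θ k)) he_mono.le_apply
  refine ⟨ψ, Y, hφY, not_weak_conv Sg ψ Y hφY ν hν_tendsto hν1 ?_⟩
  have hdecomp : ∀ n, ψ (bop Sg n Y) = μ * c n + ψ (bop Sg n v) := by
    intro n
    rw [hY]
    rw [show bop Sg n (μ • y + v) = μ • bop Sg n y + bop Sg n v by
      rw [map_add, map_smul]]
    rw [map_add, map_smul, smul_eq_mul, hc]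
  have hre_bound : ∀ᶠ k : ℕ in atTop,
      ((k:ℝ) + 1)/2 - Kv ≤ (ψ (bop Sg (ν k) Y)).re := by
    filter_upwards [hev2] with k hk
    have hcval : c (ν k) = (‖c (ν k)‖ : ℂ) * d (θ k) := by
      rw [hd]
      simp only [hν]
      rw [← mul_assoc, mul_inv_cancel₀ (by
        exact_mod_cast Complex.ofReal_ne_zero.mpr (ne_of_gt (hcpos (θ k)))), one_mul]
    have hre1 : (μ * c (ν k)).re = ‖c (ν k)‖ * (μ * d (θ k)).re := by
      conv_lhs => rw [hcval]
      rw [show μ * ((‖c (ν k)‖ : ℂ) * d (θ k)) = (‖c (ν k)‖ : ℂ) * (μ * d (θ k)) by ring]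
      exact Complex.re_ofReal_mul _ _
    have hn1 : ((θ k : ℝ) + 1) ≤ ‖c (ν k)‖ := by
      have := he (θ k + 1)
      rw [hν]
      exact_mod_cast this
    have hkθ : (k:ℝ) ≤ (θ k : ℝ) := by exact_mod_cast hθ_mono.le_apply
    have hlow1 : ((k:ℝ) + 1)/2 ≤ (μ * c (ν k)).re := by
      rw [hre1]
      calc ((k:ℝ) + 1)/2 ≤ ((θ k : ℝ) + 1) * (1/2) := by linarith
      _ ≤ ‖c (ν k)‖ * (μ * d (θ k)).re := by
          apply mul_le_mul hn1 hk (by norm_num) (norm_nonneg _)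
    have hlow2 : -Kv ≤ (ψ (bop Sg (ν k) v)).re := by
      have h5 : |(ψ (bop Sg (ν k) v)).re| ≤ ‖ψ (bop Sg (ν k) v)‖ := by
        exact Complex.abs_re_le_norm _
      exact (abs_le.mp (le_trans h5 (hKv (ν k)))).1
    rw [hdecomp]
    rw [Complex.add_re]
    linarith
  apply tendsto_atTop_mono' _ hre_bound
  have t1 : Tendsto (fun k : ℕ => (k:ℝ)) atTop atTop := tendsto_natCast_atTop_atTop
  have t2 : Tendsto (fun k : ℕ => (k:ℝ) + 1) atTop atTop :=
    tendsto_atTop_add_const_right _ 1 t1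
  have t3 : Tendsto (fun k : ℕ => ((k:ℝ) + 1)/2) atTop atTop :=
    t2.atTop_div_const (by norm_num)
  exact tendsto_atTop_add_const_right _ (-Kv) t3 |>.congr (fun k => by ring)

lemma hTpow (Sg : C0Semigroup X) (t : ℝ) (ht : 0 ≤ t) :
    ∀ k : ℕ, Sg.T ((k:ℝ) * t) = (Sg.T t)^k := by
  intro k
  induction k with
  | zero => simpa using Sg.T_zero
  | succ k ih =>
      push_cast
      rw [show ((k:ℝ)+1) * t = t + (k:ℝ)*t by ring, Sg.T_add t _ ht (by positivity), ih,
        pow_succ']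
      rfl

set_option maxHeartbeats 1000000 in
open MeasureTheory intervalIntegral in
lemma case2 (Sg : C0Semigroup X)
    (hb : ∀ y : X, ∃ K, ∀ n : ℕ, ‖bop Sg n y‖ ≤ K) :
    ∃ C : ℝ, 0 ≤ C ∧ ∀ x : X, ∃ L : X, ‖L‖ ≤ C * ‖x‖ ∧
      Tendsto (fun t : ℝ => t⁻¹ • (Sg.T t x - x)) (𝓝[>] 0) (𝓝 L) := by
  obtain ⟨C0, hC0⟩ := banach_steinhaus (g := fun n : ℕ => bop Sg n) hb
  set C : ℝ := max C0 0 with hCdef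
  have hC : 0 ≤ C := le_max_right _ _
  have hTn : ∀ n : ℕ, 1 ≤ n → ‖Sg.T (1/(n:ℝ)) - 1‖ ≤ C / n := by
    intro n hn
    have hn0 : (0:ℝ) < n := by positivity
    have h1 : ‖bop Sg n‖ = (n:ℝ) * ‖Sg.T (1/(n:ℝ)) - 1‖ := by
      rw [bop]
      rw [norm_smul ((n:ℕ):ℂ) (Sg.T (1/(n:ℝ)) - 1)]
      norm_num
    have h2 := le_trans (hC0 n) (le_max_left C0 0)
    rw [h1] at h2
    rw [le_div_iff₀ hn0]
    linarith [h2]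
  set C1 : ℝ := C * Real.exp C with hC1def
  have hC1 : 0 ≤ C1 := mul_nonneg hC (Real.exp_pos _).le
  have hpow : ∀ n : ℕ, 1 ≤ n → ∀ j : ℕ, j ≤ n → ‖(Sg.T (1/(n:ℝ)))^j‖ ≤ Real.exp C := by
    intro n hn j hj
    have hn0 : (0:ℝ) < n := by positivity
    have hexp1 : (1:ℝ) ≤ Real.exp C := by
      calc (1:ℝ) = Real.exp 0 := Real.exp_zero.symm
      _ ≤ Real.exp C := Real.exp_le_exp.mpr hC
    have h1 : ‖Sg.T (1/(n:ℝ))‖ ≤ 1 + C/n := by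
      calc ‖Sg.T (1/(n:ℝ))‖ = ‖(1 : X →L[ℂ] X) + (Sg.T (1/(n:ℝ)) - 1)‖ := by
            congr 1
            abel
      _ ≤ ‖(1 : X →L[ℂ] X)‖ + ‖Sg.T (1/(n:ℝ)) - 1‖ := norm_add_le _ _
      _ ≤ 1 + C/n := add_le_add ContinuousLinearMap.norm_id_le (hTn n hn)
    rcases Nat.eq_zero_or_pos j with rfl | hj0
    · have h1' : ‖(1 : X →L[ℂ] X)‖ ≤ 1 := ContinuousLinearMap.norm_id_le
      simpa using le_trans h1' hexp1
    calc ‖(Sg.T (1/(n:ℝ)))^j‖ ≤ ‖Sg.T (1/(n:ℝ))‖^j := norm_pow_le' _ hj0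
    _ ≤ (1 + C/n)^j := pow_le_pow_left₀ (norm_nonneg _) h1 _
    _ ≤ (Real.exp (C/n))^j := pow_le_pow_left₀ (by positivity) (by
          linarith [Real.add_one_le_exp (C/n)]) _
    _ = Real.exp ((j:ℝ) * (C/n)) := by rw [← Real.exp_nat_mul]
    _ ≤ Real.exp C := by
          apply Real.exp_le_exp.mpr
          rw [mul_div_assoc']
          rw [div_le_iff₀ hn0]
          have : (j:ℝ) ≤ n := by exact_mod_cast hj
          nlinarith
  have htel : ∀ n : ℕ, 1 ≤ n → ∀ k : ℕ, k ≤ n →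
      ‖(Sg.T (1/(n:ℝ)))^k - 1‖ ≤ (k:ℝ)/n * C1 := by
    intro n hn k
    induction k with
    | zero => intro _; simp
    | succ k ih =>
        intro hk
        have hkn : k ≤ n := le_trans (Nat.le_succ k) hk
        have hn0 : (0:ℝ) < n := by positivity
        have h1 : (Sg.T (1/(n:ℝ)))^(k+1) - 1
            = (Sg.T (1/(n:ℝ)) - 1) * (Sg.T (1/(n:ℝ)))^k + ((Sg.T (1/(n:ℝ)))^k - 1) := by
          rw [pow_succ']
          noncomm_ring
        rw [h1]
        calc ‖(Sg.T (1/(n:ℝ)) - 1) * (Sg.T (1/(n:ℝ)))^k + ((Sg.T (1/(n:ℝ)))^k - 1)‖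
            ≤ ‖(Sg.T (1/(n:ℝ)) - 1) * (Sg.T (1/(n:ℝ)))^k‖ + ‖(Sg.T (1/(n:ℝ)))^k - 1‖ :=
              norm_add_le _ _
        _ ≤ (C/n) * Real.exp C + (k:ℝ)/n * C1 := by
              apply add_le_add ?_ (ih hkn)
              calc ‖(Sg.T (1/(n:ℝ)) - 1) * (Sg.T (1/(n:ℝ)))^k‖
                  ≤ ‖Sg.T (1/(n:ℝ)) - 1‖ * ‖(Sg.T (1/(n:ℝ)))^k‖ := norm_mul_le _ _
              _ ≤ (C/n) * Real.exp C := by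
                    apply mul_le_mul (hTn n hn) (hpow n hn k hkn) (norm_nonneg _)
                      (by positivity)
        _ = ((k:ℝ)+1)/n * C1 := by rw [hC1def]; field_simp; ring
        _ = (((k+1 : ℕ)):ℝ)/n * C1 := by push_cast; ring
  have hq : ∀ n : ℕ, 1 ≤ n → ∀ k : ℕ, k ≤ n →
      ‖Sg.T ((k:ℝ)/(n:ℝ)) - 1‖ ≤ C1 * ((k:ℝ)/n) := by
    intro n hn k hk
    have hn0 : (0:ℝ) < n := by positivity
    have heq : Sg.T ((k:ℝ)/(n:ℝ)) = (Sg.T (1/(n:ℝ)))^k := by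
      rw [show (k:ℝ)/(n:ℝ) = (k:ℝ) * (1/(n:ℝ)) by ring, hTpow Sg _ (by positivity) k]
    rw [heq]
    calc ‖(Sg.T (1/(n:ℝ)))^k - 1‖ ≤ (k:ℝ)/n * C1 := htel n hn k hk
    _ = C1 * ((k:ℝ)/n) := by ring
  have hreal : ∀ t, t ∈ Set.Icc (0:ℝ) 1 → ∀ x : X, ‖Sg.T t x - x‖ ≤ C1 * t * ‖x‖ := by
    rintro t ⟨ht0, ht1⟩ x
    rcases eq_or_lt_of_le ht0 with rfl | ht0'
    · rw [show Sg.T 0 x - x = 0 by rw [Sg.T_zero]; simp, norm_zero]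
      positivity
    set q : ℕ → ℝ := fun n => ((⌊t*(n:ℝ)⌋₊ : ℕ) : ℝ)/(n:ℝ) with hqdef
    have hq0 : ∀ n, 0 ≤ q n := fun n => by positivity
    have hqt : ∀ n : ℕ, 1 ≤ n → q n ≤ t := by
      intro n hn
      have hn0 : (0:ℝ) < n := by positivity
      rw [hqdef]
      rw [div_le_iff₀ hn0]
      calc ((⌊t*(n:ℝ)⌋₊ : ℕ) : ℝ) ≤ t * (n:ℝ) := Nat.floor_le (by positivity)
      _ = t * n := rfl
    have hqlb : ∀ n : ℕ, 1 ≤ n → t - 1/n ≤ q n := by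
      intro n hn
      have hn0 : (0:ℝ) < n := by positivity
      have hfl : t*(n:ℝ) ≤ ((⌊t*(n:ℝ)⌋₊:ℕ):ℝ) + 1 := (Nat.lt_floor_add_one (t*(n:ℝ))).le
      rw [sub_le_iff_le_add]
      have h1 : t = (t*(n:ℝ))/n := by field_simp
      rw [h1]
      have h2 : (t*(n:ℝ))/(n:ℝ) ≤ (((⌊t*(n:ℝ)⌋₊:ℕ):ℝ) + 1)/(n:ℝ) := by gcongr
      calc (t*(n:ℝ))/(n:ℝ) ≤ (((⌊t*(n:ℝ)⌋₊:ℕ):ℝ) + 1)/(n:ℝ) := h2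
      _ = q n + 1/n := by rw [hqdef]; ring
    have hqtend : Tendsto q atTop (𝓝 t) := by
      apply tendsto_of_tendsto_of_tendsto_of_le_of_le'
        (g := fun n : ℕ => t - 1/(n:ℝ)) (h := fun _ : ℕ => t)
      · have h1 : Tendsto (fun n : ℕ => t - 1/(n:ℝ)) atTop (𝓝 (t - 0)) :=
          tendsto_const_nhds.sub tendsto_one_div_atTop_nhds_zero_nat
        simpa using h1
      · exact tendsto_const_nhds
      · filter_upwards [eventually_ge_atTop 1] with n hn using hqlb n hn
      · filter_upwards [eventually_ge_atTop 1] with n hn using hqt n hn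
    have hTq : Tendsto (fun n => Sg.T (q n) x) atTop (𝓝 (Sg.T t x)) := by
      have hct : ContinuousWithinAt (fun s => Sg.T s x) (Set.Ici (0:ℝ)) t :=
        (Sg.T_cont x) t (Set.mem_Ici.mpr ht0)
      exact hct.tendsto.comp (tendsto_nhdsWithin_of_tendsto_nhds_of_eventually_within _
        hqtend (Eventually.of_forall fun n => Set.mem_Ici.mpr (hq0 n)))
    have hnorm : Tendsto (fun n => ‖Sg.T (q n) x - x‖) atTop (𝓝 ‖Sg.T t x - x‖) :=
      (hTq.sub tendsto_const_nhds).norm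
    apply le_of_tendsto hnorm
    filter_upwards [eventually_ge_atTop 1] with n hn
    have hn0 : (0:ℝ) < n := by positivity
    have hkn : ⌊t*(n:ℝ)⌋₊ ≤ n := by
      have h5 : t*(n:ℝ) ≤ (n:ℝ) := by nlinarith
      calc ⌊t*(n:ℝ)⌋₊ ≤ ⌊(n:ℝ)⌋₊ := Nat.floor_mono h5
      _ = n := Nat.floor_natCast n
    have hb1 : ‖Sg.T (q n) x - x‖ ≤ C1 * q n * ‖x‖ := by
      have h2 := hq n hn ⌊t*(n:ℝ)⌋₊ hkn
      calc ‖Sg.T (q n) x - x‖ = ‖(Sg.T (q n) - 1) x‖ := by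
            simp [ContinuousLinearMap.sub_apply]
      _ ≤ ‖Sg.T (q n) - 1‖ * ‖x‖ := ContinuousLinearMap.le_opNorm _ _
      _ ≤ (C1 * q n) * ‖x‖ := mul_le_mul_of_nonneg_right h2 (norm_nonneg _)
      _ = C1 * q n * ‖x‖ := by ring
    calc ‖Sg.T (q n) x - x‖ ≤ C1 * q n * ‖x‖ := hb1
    _ ≤ C1 * t * ‖x‖ := by
        apply mul_le_mul_of_nonneg_right ?_ (norm_nonneg _)
        exact mul_le_mul_of_nonneg_left (hqt n hn) hC1
  have hop1 : ∀ t, t ∈ Set.Icc (0:ℝ) 1 → ‖Sg.T t - 1‖ ≤ C1 * t := by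
    intro t ht
    apply ContinuousLinearMap.opNorm_le_bound _ (mul_nonneg hC1 ht.1)
    intro x
    calc ‖(Sg.T t - 1) x‖ = ‖Sg.T t x - x‖ := by simp [ContinuousLinearMap.sub_apply]
    _ ≤ C1 * t * ‖x‖ := hreal t ht x
  set C2 : ℝ := C1 * (2 + C1) / 2 with hC2def
  have hC2 : 0 ≤ C2 := by positivity
  have hop2 : ∀ t, t ∈ Set.Icc (0:ℝ) 2 → ‖Sg.T t - 1‖ ≤ C2 * t := by
    rintro t ⟨ht0, ht2⟩
    have hhalf : t/2 ∈ Set.Icc (0:ℝ) 1 := ⟨by positivity, by linarith⟩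
    have hTt : Sg.T t = Sg.T (t/2) * Sg.T (t/2) := by
      have h2 := Sg.T_add (t/2) (t/2) (by positivity) (by positivity)
      rw [show t/2 + t/2 = t by ring] at h2
      rw [h2]
      rfl
    have hA1 : ‖Sg.T (t/2) - 1‖ ≤ C1 * (t/2) := hop1 _ hhalf
    have hAn : ‖Sg.T (t/2)‖ ≤ 1 + C1 := by
      calc ‖Sg.T (t/2)‖ = ‖(1:X →L[ℂ] X) + (Sg.T (t/2) - 1)‖ := by congr 1; abel
      _ ≤ ‖(1:X →L[ℂ] X)‖ + ‖Sg.T (t/2) - 1‖ := norm_add_le _ _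
      _ ≤ 1 + C1 * (t/2) := add_le_add ContinuousLinearMap.norm_id_le hA1
      _ ≤ 1 + C1 := by nlinarith
    have hdecomp : Sg.T t - 1 = (Sg.T (t/2) - 1) * Sg.T (t/2) + (Sg.T (t/2) - 1) := by
      rw [hTt]; noncomm_ring
    rw [hdecomp]
    calc ‖(Sg.T (t/2) - 1) * Sg.T (t/2) + (Sg.T (t/2) - 1)‖
        ≤ ‖(Sg.T (t/2) - 1) * Sg.T (t/2)‖ + ‖Sg.T (t/2) - 1‖ := norm_add_le _ _
    _ ≤ (C1 * (t/2)) * (1 + C1) + C1 * (t/2) := by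
        apply add_le_add ?_ hA1
        exact le_trans (norm_mul_le _ _)
          (mul_le_mul hA1 hAn (norm_nonneg _) (by positivity))
    _ = C2 * t := by rw [hC2def]; ring
  have hT2 : ∀ t, t ∈ Set.Icc (0:ℝ) 2 → ‖Sg.T t‖ ≤ 1 + 2*C2 := by
    intro t ht
    calc ‖Sg.T t‖ = ‖(1:X →L[ℂ] X) + (Sg.T t - 1)‖ := by congr 1; abel
    _ ≤ ‖(1:X →L[ℂ] X)‖ + ‖Sg.T t - 1‖ := norm_add_le _ _
    _ ≤ 1 + C2 * t := add_le_add ContinuousLinearMap.norm_id_le (hop2 t ht)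
    _ ≤ 1 + 2*C2 := by nlinarith [ht.1, ht.2]
  set L : ℝ := C2 * (1 + 2*C2) with hLdef
  have hL : 0 ≤ L := by positivity
  have hLip : ∀ a b : ℝ, 0 ≤ a → a ≤ b → b ≤ 2 → ‖Sg.T b - Sg.T a‖ ≤ L * (b - a) := by
    intro a b ha hab hb2
    have h1 : Sg.T b = (Sg.T (b - a)) * Sg.T a := by
      have h2 := Sg.T_add (b-a) a (by linarith) ha
      rw [sub_add_cancel] at h2
      rw [h2]
      rfl
    have h2 : Sg.T b - Sg.T a = (Sg.T (b-a) - 1) * Sg.T a := by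
      rw [h1]; noncomm_ring
    rw [h2]
    calc ‖(Sg.T (b-a) - 1) * Sg.T a‖ ≤ ‖Sg.T (b-a) - 1‖ * ‖Sg.T a‖ := norm_mul_le _ _
    _ ≤ (C2 * (b-a)) * (1 + 2*C2) := by
        apply mul_le_mul (hop2 _ ⟨by linarith, by linarith⟩)
          (hT2 a ⟨ha, by linarith⟩) (norm_nonneg _) (mul_nonneg hC2 (by linarith))
    _ = L * (b - a) := by rw [hLdef]; ring
  have hLipAbs : ∀ a ∈ Set.Icc (0:ℝ) 2, ∀ b ∈ Set.Icc (0:ℝ) 2,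
      ‖Sg.T b - Sg.T a‖ ≤ L * |b - a| := by
    intro a ha b hb
    rcases le_total a b with hab | hab
    · rw [abs_of_nonneg (by linarith)]
      exact hLip a b ha.1 hab hb.2
    · rw [← norm_neg, neg_sub, abs_of_nonpos (by linarith), neg_sub]
      exact hLip b a hb.1 hab ha.2
  have hTcont2 : ContinuousOn (fun s => Sg.T s) (Set.Icc (0:ℝ) 2) := by
    rw [Metric.continuousOn_iff]
    intro a ha ε hε
    refine ⟨ε/(L+1), by positivity, fun b hb hab => ?_⟩
    rw [dist_eq_norm]
    have h12 : ‖Sg.T b - Sg.T a‖ ≤ L * |b - a| := hLipAbs a ha b hb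
    have h13 : |b - a| < ε/(L+1) := by
      rw [Real.dist_eq] at hab
      exact hab
    calc ‖Sg.T b - Sg.T a‖ ≤ L * |b - a| := h12
    _ ≤ L * (ε/(L+1)) := mul_le_mul_of_nonneg_left h13.le hL
    _ < ε := by
        rw [mul_div_assoc']
        rw [div_lt_iff₀ (by positivity)]
        nlinarith
  have Tint2 : ∀ a b : ℝ, 0 ≤ a → a ≤ 2 → 0 ≤ b → b ≤ 2 →
      IntervalIntegrable (fun s => Sg.T s) MeasureTheory.volume a b := by
    intro a b ha ha2 hb hb2
    apply ContinuousOn.intervalIntegrable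
    apply hTcont2.mono
    rw [Set.uIcc_eq_union]
    rintro x (hx | hx)
    · exact ⟨le_trans ha hx.1, le_trans hx.2 hb2⟩
    · exact ⟨le_trans hb hx.1, le_trans hx.2 ha2⟩
  set G : ℝ → X →L[ℂ] X := fun t => ∫ s in (0:ℝ)..t, Sg.T s with hGdef
  have hGadd : ∀ t h : ℝ, 0 ≤ t → 0 ≤ h → t + h ≤ 2 →
      G (t+h) - G t = ∫ s in t..(t+h), Sg.T s := by
    intro t h ht hh h2
    have hadj := integral_add_adjacent_intervals (μ := MeasureTheory.volume)
      (Tint2 0 t le_rfl (by linarith) ht (by linarith))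
      (Tint2 t (t+h) ht (by linarith) (by linarith) h2)
    rw [hGdef]
    simp only []
    rw [← hadj, add_sub_cancel_left]
  have hGdiff : ∀ t : ℝ, 0 ≤ t → t + 1 ≤ 2 → ∀ h : ℝ, 0 < h → h ≤ 1 →
      ‖h⁻¹ • (G (t+h) - G t) - Sg.T t‖ ≤ L * h := by
    intro t ht ht2 h hh0 hh1
    rw [hGadd t h ht hh0.le (by linarith)]
    have hconst : (∫ _ in t..(t+h), Sg.T t) = h • Sg.T t := by
      rw [intervalIntegral.integral_const]
      congr 1
      ring
    have hid : h⁻¹ • (∫ s in t..(t+h), Sg.T s) - Sg.T t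
        = h⁻¹ • ((∫ s in t..(t+h), Sg.T s) - h • Sg.T t) := by
      rw [smul_sub, smul_smul, inv_mul_cancel₀ hh0.ne', one_smul]
    rw [hid, ← hconst, ← intervalIntegral.integral_sub
      (Tint2 t (t+h) ht (by linarith) (by linarith) (by linarith) ) intervalIntegrable_const]
    rw [norm_smul h⁻¹ (∫ s in t..(t+h), (Sg.T s - Sg.T t)), Real.norm_eq_abs,
      abs_of_pos (inv_pos.mpr hh0)]
    have hbd : ‖∫ s in t..(t+h), (Sg.T s - Sg.T t)‖ ≤ (L*h) * |t+h - t| := by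
      apply intervalIntegral.norm_integral_le_of_norm_le_const
      intro s hs
      rw [Set.uIoc_of_le (by linarith)] at hs
      calc ‖Sg.T s - Sg.T t‖ ≤ L * (s - t) := hLip t s ht hs.1.le (by linarith [hs.2])
      _ ≤ L * h := mul_le_mul_of_nonneg_left (by linarith [hs.2]) hL
    calc h⁻¹ * ‖∫ s in t..(t+h), (Sg.T s - Sg.T t)‖ ≤ h⁻¹ * ((L*h) * |t+h-t|) :=
          mul_le_mul_of_nonneg_left hbd (by positivity)
    _ = L * h := by
          rw [show t+h-t = h by ring, abs_of_pos hh0]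
          field_simp
  set δ : ℝ := min 1 (1/(C2+1)) with hδdef
  have hδ0 : 0 < δ := lt_min one_pos (by positivity)
  have hδ1 : δ ≤ 1 := min_le_left _ _
  have hδC : C2 * δ < 1 := by
    have h1 : δ ≤ 1/(C2+1) := min_le_right _ _
    have h2 : C2 * δ ≤ C2 * (1/(C2+1)) := mul_le_mul_of_nonneg_left h1 hC2
    have h3 : C2 * (1/(C2+1)) < 1 := by
      rw [mul_one_div, div_lt_one (by positivity)]
      linarith
    linarith
  set V : X →L[ℂ] X := G δ with hVdef
  have hV' : V = ∫ s in (0:ℝ)..δ, Sg.T s := hVdef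
  have hVnear : ‖(1 : X →L[ℂ] X) - δ⁻¹ • V‖ < 1 := by
    have h0 : δ • (1 : X →L[ℂ] X) - V = ∫ s in (0:ℝ)..δ, ((1:X →L[ℂ] X) - Sg.T s) := by
      rw [intervalIntegral.integral_sub intervalIntegrable_const
        (Tint2 0 δ le_rfl (by norm_num) hδ0.le (by linarith)), intervalIntegral.integral_const,
        sub_zero, hV']
    have h1 : ‖δ • (1 : X →L[ℂ] X) - V‖ ≤ (C2*δ)*|δ - 0| := by
      rw [h0]
      apply intervalIntegral.norm_integral_le_of_norm_le_const
      intro s hs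
      rw [Set.uIoc_of_le hδ0.le] at hs
      rw [← norm_neg, neg_sub]
      calc ‖Sg.T s - 1‖ ≤ C2 * s := hop2 s ⟨hs.1.le, by linarith [hs.2, hδ1]⟩
      _ ≤ C2 * δ := mul_le_mul_of_nonneg_left hs.2 hC2
    have h2 : (1 : X →L[ℂ] X) - δ⁻¹ • V = δ⁻¹ • (δ • (1:X →L[ℂ] X) - V) := by
      rw [smul_sub, smul_smul, inv_mul_cancel₀ hδ0.ne', one_smul]
    rw [h2, norm_smul δ⁻¹ (δ • (1:X →L[ℂ] X) - V), Real.norm_eq_abs,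
      abs_of_pos (inv_pos.mpr hδ0)]
    calc δ⁻¹ * ‖δ • (1 : X →L[ℂ] X) - V‖ ≤ δ⁻¹ * ((C2*δ)*|δ - 0|) :=
          mul_le_mul_of_nonneg_left h1 (by positivity)
    _ = C2 * δ := by
          rw [sub_zero, abs_of_pos hδ0]
          field_simp
    _ < 1 := hδC
  set uu : (X →L[ℂ] X)ˣ := Units.oneSub _ hVnear with huudef
  have huu : (uu : X →L[ℂ] X) = δ⁻¹ • V := by
    show (1 : X →L[ℂ] X) - ((1 : X →L[ℂ] X) - δ⁻¹ • V) = δ⁻¹ • V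
    abel
  set B : X →L[ℂ] X := δ⁻¹ • ((uu⁻¹ : (X →L[ℂ] X)ˣ) : X →L[ℂ] X) with hBdef
  have hVB : V * B = 1 := by
    have hV2 : V = δ • (uu : X →L[ℂ] X) := by
      rw [huu, smul_smul, mul_inv_cancel₀ hδ0.ne', one_smul]
    rw [hV2, hBdef, smul_mul_smul_comm, mul_inv_cancel₀ hδ0.ne', Units.mul_inv, one_smul]
  have hVBx : ∀ x : X, V (B x) = x := by
    intro x
    have h5 : (V * B) x = x := by rw [hVB]; rfl
    simpa [ContinuousLinearMap.mul_apply] using h5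
  have hkey : ∀ h : ℝ, 0 < h → h ≤ 1 →
      (Sg.T h - 1) * V = (G (δ+h) - G δ) - (G h - G 0) := by
    intro h hh0 hh1
    have hTV : Sg.T h * V = ∫ s in (0:ℝ)..δ, (Sg.T h * Sg.T s) := by
      have h6 := ContinuousLinearMap.intervalIntegral_comp_comm
        ((ContinuousLinearMap.compL ℂ X X X) (Sg.T h))
        (Tint2 0 δ le_rfl (by norm_num) hδ0.le (by linarith))
      rw [hV']
      simp only [ContinuousLinearMap.compL_apply] at h6
      exact h6.symm
    have hcong : (∫ s in (0:ℝ)..δ, (Sg.T h * Sg.T s)) = ∫ s in (0:ℝ)..δ, Sg.T (h + s) := by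
      apply intervalIntegral.integral_congr
      intro s hs
      rw [Set.uIcc_of_le hδ0.le] at hs
      show Sg.T h * Sg.T s = Sg.T (h + s)
      rw [Sg.T_add h s hh0.le hs.1]
      rfl
    have hshift : (∫ s in (0:ℝ)..δ, Sg.T (h + s)) = ∫ s in h..(δ+h), Sg.T s := by
      have h7 := intervalIntegral.integral_comp_add_left (a := (0:ℝ)) (b := δ)
        (fun s => Sg.T s) h
      rw [h7]
      rw [add_zero, add_comm h δ]
    have hadj : (∫ s in h..(δ+h), Sg.T s) = G (δ+h) - G h := by
      have h8 := integral_add_adjacent_intervals (μ := MeasureTheory.volume)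
        (Tint2 0 h le_rfl (by norm_num) hh0.le (by linarith))
        (Tint2 h (δ+h) hh0.le (by linarith) (by linarith) (by linarith))
      have hGa : G (δ+h) = ∫ s in (0:ℝ)..(δ+h), Sg.T s := rfl
      have hGb : G h = ∫ s in (0:ℝ)..h, Sg.T s := rfl
      rw [hGa, hGb]
      exact eq_sub_of_add_eq' h8
    have hG0 : G 0 = 0 := intervalIntegral.integral_same
    rw [sub_mul, one_mul, hTV, hcong, hshift, hadj, hG0]
    abel
  have hlim : Tendsto (fun h : ℝ => h⁻¹ • ((Sg.T h - 1) * V)) (𝓝[>] (0:ℝ))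
      (𝓝 (Sg.T δ - 1)) := by
    rw [← tendsto_sub_nhds_zero_iff]
    apply squeeze_zero_norm' (a := fun h : ℝ => L * h + L * h)
    · filter_upwards [Ioc_mem_nhdsGT_of_mem (Set.left_mem_Ico.mpr zero_lt_one)] with h hh
      have e1 := hGdiff δ hδ0.le (by linarith) h hh.1 hh.2
      have e2 := hGdiff 0 le_rfl (by norm_num) h hh.1 hh.2
      rw [zero_add, Sg.T_zero] at e2
      have hident : h⁻¹ • ((Sg.T h - 1) * V) - (Sg.T δ - 1)
          = (h⁻¹ • (G (δ+h) - G δ) - Sg.T δ) - (h⁻¹ • (G h - G 0) - 1) := by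
        rw [hkey h hh.1 hh.2, smul_sub]
        abel
      rw [hident]
      exact le_trans (norm_sub_le _ _) (add_le_add e1 e2)
    · have h9 : Tendsto (fun h : ℝ => L * h + L * h) (𝓝 0) (𝓝 (L * 0 + L * 0)) :=
        ((continuous_const.mul continuous_id).add (continuous_const.mul continuous_id)).tendsto 0
      have h10 : (L * 0 + L * 0 : ℝ) = 0 := by ring
      rw [h10] at h9
      exact h9.mono_left nhdsWithin_le_nhds
  refine ⟨‖Sg.T δ - 1‖ * ‖B‖, by positivity, fun x => ⟨(Sg.T δ - 1) (B x), ?_, ?_⟩⟩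
  · calc ‖(Sg.T δ - 1) (B x)‖ ≤ ‖Sg.T δ - 1‖ * ‖B x‖ := ContinuousLinearMap.le_opNorm _ _
    _ ≤ ‖Sg.T δ - 1‖ * (‖B‖ * ‖x‖) :=
        mul_le_mul_of_nonneg_left (B.le_opNorm x) (norm_nonneg _)
    _ = (‖Sg.T δ - 1‖ * ‖B‖) * ‖x‖ := by ring
  · have hev : Tendsto (fun h : ℝ => (h⁻¹ • ((Sg.T h - 1) * V)) (B x)) (𝓝[>] (0:ℝ))
        (𝓝 ((Sg.T δ - 1) (B x))) := by
      have h11 := ((ContinuousLinearMap.apply ℂ X (B x)).continuous.tendsto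
        (Sg.T δ - 1)).comp hlim
      simpa [Function.comp_def] using h11
    apply hev.congr'
    filter_upwards [Ioc_mem_nhdsGT_of_mem (Set.left_mem_Ico.mpr zero_lt_one)] with h hh
    rw [ContinuousLinearMap.smul_apply, ContinuousLinearMap.mul_apply, hVBx]
    simp [ContinuousLinearMap.sub_apply]

end Stmt2Aux

/-- `A`, with domain `domA`, is the generator of the C₀-semigroup `Sg`:
`domA` is exactly the set of `x ∈ X` for which `(T t x - x)/t` converges as
`t → 0⁺`, and `A x` is this limit. -/
def IsGeneratorOf {X : Type*} [NormedAddCommGroup X] [NormedSpace ℂ X]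
    (Sg : C0Semigroup X) (domA : Set X) (A : X → X) : Prop :=
  (∀ x : X, x ∈ domA ↔
      ∃ y : X, Tendsto (fun t : ℝ => t⁻¹ • (Sg.T t x - x)) (𝓝[>] 0) (𝓝 y)) ∧
  (∀ x ∈ domA, Tendsto (fun t : ℝ => t⁻¹ • (Sg.T t x - x)) (𝓝[>] 0) (𝓝 (A x)))

/-- if the generator `A` is unbounded, there are a rank-one bounded
projection `P z = φ(z) • y` (with `φ y = 1`) such that `(e^{(1/n)A} P)^n y` does not
converge even weakly. -/
theorem stmt_2 {X : Type*} [NormedAddCommGroup X] [NormedSpace ℂ X] [CompleteSpace X]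
    (Sg : C0Semigroup X) (domA : Set X) (A : X → X)
    (hgen : IsGeneratorOf Sg domA A)
    (hunb : ¬ (domA = Set.univ ∧ ∃ C : ℝ, ∀ x : X, ‖A x‖ ≤ C * ‖x‖)) :
    ∃ (φ : X →L[ℂ] ℂ) (y : X), φ y = 1 ∧
      ¬ ∃ z : X, ∀ ψ : X →L[ℂ] ℂ,
          Tendsto
            (fun n : ℕ => ψ ((((Sg.T (1 / n)).comp (φ.smulRight y)) ^ n) y))
            atTop (𝓝 (ψ z)) := by
  by_cases hcase : ∃ y : X, ¬ ∃ K, ∀ n : ℕ, ‖Stmt2Aux.bop Sg n y‖ ≤ K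
  · obtain ⟨y, hy⟩ := hcase
    exact Stmt2Aux.case1 Sg y hy
  · exfalso
    push_neg at hcase
    obtain ⟨C, hC0, hC⟩ := Stmt2Aux.case2 Sg hcase
    apply hunb
    constructor
    · apply Set.eq_univ_of_forall
      intro x
      obtain ⟨L, hL1, hL2⟩ := hC x
      exact (hgen.1 x).mpr ⟨L, hL2⟩
    · refine ⟨C, fun x => ?_⟩
      obtain ⟨Lx, hL1, hL2⟩ := hC x
      have hx : x ∈ domA := (hgen.1 x).mpr ⟨Lx, hL2⟩
      have h3 := hgen.2 x hx
      have h4 : A x = Lx := tendsto_nhds_unique h3 hL2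
      rw [h4]
      exact hL1
end

section
/- Let A be the generator of a C₀-semigroup (e^{tA})_{t≥0} on a complex Banach space X, let φ ∈ X* and x ∈ dom A with φ(x) = 1, and let P_x be the rank-one projection P_x z = φ(z) x. Then lim_{n→∞} φ((e^{(1/n)A} P_x)^n x) = e^{φ(Ax)}. -/
open Filter Topology


/-- key algebraic identity -/
lemma pow_proj_eval {X : Type*} [NormedAddCommGroup X] [NormedSpace ℂ X]
    (M : X →L[ℂ] X) (φ : X →L[ℂ] ℂ) (x : X) (hφx : φ x = 1)
    (n : ℕ) : φ ((((M).comp (φ.smulRight x)) ^ n) x) = (φ (M x)) ^ n := by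
  induction n with
  | zero => simpa using hφx
  | succ n ih =>
      rw [pow_succ']
      have : ∀ z : X, φ (((M).comp (φ.smulRight x)) z) = φ z * φ (M x) := by
        intro z
        simp [ContinuousLinearMap.comp_apply, ContinuousLinearMap.smulRight_apply,
          map_smul, smul_eq_mul]
      rw [ContinuousLinearMap.mul_apply, this, ih, pow_succ]

/-- If `n • (a n - 1) → c` then `a n ^ n → exp c`. -/
lemma tendsto_pow_exp_of_mul_sub_one {a : ℕ → ℂ} {c : ℂ}
    (h : Filter.Tendsto (fun n : ℕ => (n : ℂ) * (a n - 1)) atTop (𝓝 c)) :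
    Filter.Tendsto (fun n : ℕ => a n ^ n) atTop (𝓝 (Complex.exp c)) := by
  have ha1 : Tendsto a atTop (𝓝 1) := by
    have hinv : Tendsto (fun n : ℕ => ((n : ℂ))⁻¹) atTop (𝓝 0) := by
      simpa using (tendsto_natCast_atTop_atTop (R := ℝ)).inv_tendsto_atTop.ofReal
    have := hinv.mul h
    have h2 : Tendsto (fun n : ℕ => (n : ℂ)⁻¹ * ((n:ℂ) * (a n - 1))) atTop (𝓝 0) := by
      simpa using this
    have h3 : Tendsto (fun n : ℕ => a n - 1) atTop (𝓝 0) := by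
      apply h2.congr'
      filter_upwards [eventually_gt_atTop 0] with n hn
      have : (n : ℂ) ≠ 0 := Nat.cast_ne_zero.2 hn.ne'
      field_simp
    simpa using h3.add (tendsto_const_nhds (x := (1:ℂ)))
  -- the auxiliary function g(z) = log z / (z - 1), with g 1 = 1
  set g : ℂ → ℂ := fun z => if z = 1 then 1 else Complex.log z / (z - 1) with hg
  have hgcont : Tendsto g (𝓝 1) (𝓝 1) := by
    have hboth : Tendsto g (𝓝[≠] (1:ℂ) ⊔ pure 1) (𝓝 1) := by
      rw [tendsto_sup]
      constructor
      · have hd := (Complex.hasDerivAt_log Complex.one_mem_slitPlane)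
        rw [hasDerivAt_iff_tendsto_slope] at hd
        simp only [inv_one] at hd
        apply hd.congr'
        filter_upwards [self_mem_nhdsWithin] with z hz
        simp only [Set.mem_compl_iff, Set.mem_singleton_iff] at hz
        simp [hg, slope_def_field, hz, Complex.log_one]
      · simpa [hg] using tendsto_pure_nhds g 1
    rwa [nhdsNE_sup_pure] at hboth
  have hlog : Tendsto (fun n : ℕ => (n : ℂ) * Complex.log (a n)) atTop (𝓝 c) := by
    have key : ∀ n : ℕ, (n : ℂ) * Complex.log (a n) = ((n : ℂ) * (a n - 1)) * g (a n) := by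
      intro n
      by_cases h1 : a n = 1
      · simp [h1, hg]
      · have h2 : a n - 1 ≠ 0 := sub_ne_zero.2 h1
        field_simp [hg, h1]
        rw [show g (a n) = Complex.log (a n) / (a n - 1) from if_neg h1]
        linear_combination (-((n : ℂ) * Complex.log (a n))) * mul_inv_cancel₀ h2
    simp only [key]
    simpa using h.mul (hgcont.comp ha1)
  have hexp := hlog.cexp
  apply hexp.congr'
  have hne : ∀ᶠ n in atTop, a n ≠ 0 := by
    have := ha1.eventually_ne (by norm_num : (1:ℂ) ≠ 0)
    filter_upwards [this] with n hn using hn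
  filter_upwards [hne] with n hn
  rw [Complex.exp_nat_mul, Complex.exp_log hn]

/-- for `x ∈ dom A` with `φ x = 1` and `P_x z = φ(z) • x`, one has
`φ((e^{(1/n)A} P_x)^n x) → e^{φ(Ax)}`. -/
theorem stmt_8 {X : Type*} [NormedAddCommGroup X] [NormedSpace ℂ X] [CompleteSpace X]
    (Sg : C0Semigroup X) (domA : Set X) (A : X → X)
    (hgen : IsGeneratorOf Sg domA A)
    (φ : X →L[ℂ] ℂ) (x : X) (hx : x ∈ domA) (hφx : φ x = 1) :
    Tendsto (fun n : ℕ => φ ((((Sg.T (1 / n)).comp (φ.smulRight x)) ^ n) x)) atTop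
      (𝓝 (Complex.exp (φ (A x)))) := by
  have hA := hgen.2 x hx
  -- apply φ
  have h1 : Tendsto (fun t : ℝ => (t : ℂ)⁻¹ * (φ (Sg.T t x) - 1)) (𝓝[>] 0)
      (𝓝 (φ (A x))) := by
    have := (φ.continuous.tendsto (A x)).comp hA
    apply this.congr
    intro t
    simp [map_smul, map_sub, hφx, Complex.ofReal_inv, smul_eq_mul]
  have h2 : Tendsto (fun n : ℕ => (1 / (n:ℝ))) atTop (𝓝[>] 0) := by
    apply tendsto_nhdsWithin_of_tendsto_nhds_of_eventually_within
    · simpa using (tendsto_one_div_atTop_nhds_zero_nat : Tendsto (fun n : ℕ => 1 / (n:ℝ)) atTop (𝓝 0))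
    · filter_upwards [eventually_gt_atTop 0] with n hn
      exact Set.mem_Ioi.2 (one_div_pos.2 (Nat.cast_pos.2 hn))
  have h3 : Tendsto (fun n : ℕ => (n : ℂ) * (φ (Sg.T (1/n) x) - 1)) atTop (𝓝 (φ (A x))) := by
    have := h1.comp h2
    apply this.congr'
    filter_upwards [eventually_gt_atTop 0] with n hn
    have hn' : ((n:ℝ)) ≠ 0 := by exact_mod_cast hn.ne'
    simp [Function.comp, one_div, hn']
  have := tendsto_pow_exp_of_mul_sub_one h3
  apply this.congr
  intro n
  rw [pow_proj_eval]
  exact hφx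
end

section
/- Let A be a densely defined linear operator on a complex Banach space X and let φ ∈ X* with φ ∉ dom A*. Then for every z ∈ dom A with φ(z) = 1, every ε > 0 and every M ∈ ℝ, there exists x ∈ dom A with ‖x − z‖ < ε, φ(x) = 1 and Re φ(Ax) ≥ M. -/
open Filter Topology

/-- if `A` is a densely defined operator and `φ ∉ dom A*` (i.e. the
functional `x ↦ φ(Ax)` is unbounded on `dom A`), then near any `z ∈ dom A` with
`φ z = 1` one can find `x ∈ dom A` with `φ x = 1` and `Re φ(Ax)` arbitrarily large. -/
theorem stmt_9 {X : Type*} [NormedAddCommGroup X] [NormedSpace ℂ X] [CompleteSpace X]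
    (A : X →ₗ.[ℂ] X) (hdense : Dense (A.domain : Set X))
    (φ : X →L[ℂ] ℂ)
    (hφ : ¬ ∃ C : ℝ, ∀ x : A.domain, ‖φ (A x)‖ ≤ C * ‖(x : X)‖)
    (z : A.domain) (hz : φ (z : X) = 1) (ε : ℝ) (hε : 0 < ε) (M : ℝ) :
    ∃ x : A.domain, ‖(x : X) - (z : X)‖ < ε ∧ φ (x : X) = 1 ∧ M ≤ (φ (A x)).re := by
  push_neg at hφ
  set δ : ℝ := ε / (2 * (1 + ‖φ‖ * ‖(z : X)‖)) with hδdef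
  have hden : (0:ℝ) < 2 * (1 + ‖φ‖ * ‖(z : X)‖) := by positivity
  have hδpos : 0 < δ := div_pos hε hden
  set K : ℝ := M + ‖φ (A z)‖ * (1 + ‖φ‖ * δ) with hKdef
  obtain ⟨u, hu⟩ := hφ ((|K| + 1) / δ)
  have hupos : 0 < ‖(u : X)‖ := by
    rcases eq_or_ne u 0 with h | h
    · exfalso; rw [h] at hu; simp at hu
    · exact norm_pos_iff.mpr fun hh => h (Subtype.ext hh)
  set t : ℝ := δ / ‖(u : X)‖ with htdef
  have htpos : 0 < t := div_pos hδpos hupos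
  set v : A.domain := (t : ℂ) • u with hvdef
  have hv_norm : ‖(v : X)‖ = δ := by
    have : (v : X) = (t : ℂ) • (u : X) := rfl
    rw [this, norm_smul, Complex.norm_real, Real.norm_eq_abs, abs_of_pos htpos, htdef,
      div_mul_cancel₀ _ hupos.ne']
  have hAv : φ (A v) = (t : ℂ) * φ (A u) := by
    rw [hvdef, A.map_smul, map_smul, smul_eq_mul]
  set a : ℂ := φ (A v) with hadef
  have han : ‖a‖ = t * ‖φ (A u)‖ := by
    rw [hAv, norm_mul, Complex.norm_real, Real.norm_eq_abs, abs_of_pos htpos]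
  have haK : |K| + 1 < ‖a‖ := by
    have h1 : t * ((|K| + 1) / δ * ‖(u : X)‖) < t * ‖φ (A u)‖ :=
      mul_lt_mul_of_pos_left hu htpos
    have h2 : t * ((|K| + 1) / δ * ‖(u : X)‖) = |K| + 1 := by
      rw [htdef]; field_simp
    rw [han]; linarith
  have hapos : 0 < ‖a‖ := lt_of_lt_of_le (by positivity) haK.le
  set c : ℂ := (starRingEnd ℂ) a / (‖a‖ : ℂ) with hcdef
  have hc : ‖c‖ = 1 := by
    rw [hcdef, norm_div, RCLike.norm_conj, Complex.norm_real, Real.norm_eq_abs,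
      abs_of_pos hapos, div_self hapos.ne']
  set w : A.domain := c • v with hwdef
  have hw_norm : ‖(w : X)‖ = δ := by
    have : (w : X) = c • (v : X) := rfl
    rw [this, norm_smul, hc, one_mul, hv_norm]
  have haw : φ (A w) = (‖a‖ : ℂ) := by
    have h1 : φ (A w) = c * a := by
      rw [hwdef, A.map_smul, map_smul, smul_eq_mul, hadef]
    have h2 : (starRingEnd ℂ) a * a = (‖a‖ : ℂ) ^ 2 := by
      rw [mul_comm, Complex.mul_conj']
    have hne : (‖a‖ : ℂ) ≠ 0 := by
      exact_mod_cast hapos.ne'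
    rw [h1, hcdef, div_mul_eq_mul_div, h2, sq, mul_div_assoc, div_self hne, mul_one]
  have hφw : ‖φ (w : X)‖ ≤ ‖φ‖ * δ := by
    calc ‖φ (w : X)‖ ≤ ‖φ‖ * ‖(w : X)‖ := φ.le_opNorm _
    _ = ‖φ‖ * δ := by rw [hw_norm]
  refine ⟨((1 : ℂ) - φ (w : X)) • z + w, ?_, ?_, ?_⟩
  · have hx : ((((1 : ℂ) - φ (w : X)) • z + w : A.domain) : X)
        = ((1 : ℂ) - φ (w : X)) • (z : X) + (w : X) := rfl
    have hdiff : ((((1 : ℂ) - φ (w : X)) • z + w : A.domain) : X) - (z : X)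
        = (w : X) - φ (w : X) • (z : X) := by
      rw [hx]; module
    have hδε : δ * (1 + ‖φ‖ * ‖(z : X)‖) = ε / 2 := by
      rw [hδdef]; field_simp
    calc ‖((((1 : ℂ) - φ (w : X)) • z + w : A.domain) : X) - (z : X)‖
        = ‖(w : X) - φ (w : X) • (z : X)‖ := by rw [hdiff]
      _ ≤ ‖(w : X)‖ + ‖φ (w : X) • (z : X)‖ := norm_sub_le _ _
      _ = δ + ‖φ (w : X)‖ * ‖(z : X)‖ := by rw [hw_norm, norm_smul]
      _ ≤ δ + ‖φ‖ * δ * ‖(z : X)‖ := by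
          have := mul_le_mul_of_nonneg_right hφw (norm_nonneg (z : X))
          linarith
      _ = δ * (1 + ‖φ‖ * ‖(z : X)‖) := by ring
      _ = ε / 2 := hδε
      _ < ε := by linarith
  · have hx : ((((1 : ℂ) - φ (w : X)) • z + w : A.domain) : X)
        = ((1 : ℂ) - φ (w : X)) • (z : X) + (w : X) := rfl
    rw [hx, map_add, map_smul, hz, smul_eq_mul]
    ring
  · have hAx : φ (A (((1 : ℂ) - φ (w : X)) • z + w))
        = ((1 : ℂ) - φ (w : X)) * φ (A z) + (‖a‖ : ℂ) := by
      rw [A.map_add, A.map_smul, map_add, map_smul, smul_eq_mul, haw]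
    rw [hAx]
    have hre : (((1 : ℂ) - φ (w : X)) * φ (A z) + (‖a‖ : ℂ)).re
        = (((1 : ℂ) - φ (w : X)) * φ (A z)).re + ‖a‖ := by
      rw [Complex.add_re, Complex.ofReal_re]
    rw [hre]
    have hb1 : -‖((1 : ℂ) - φ (w : X)) * φ (A z)‖
        ≤ (((1 : ℂ) - φ (w : X)) * φ (A z)).re := by
      have h1 := Complex.abs_re_le_norm (((1 : ℂ) - φ (w : X)) * φ (A z))
      linarith [neg_abs_le ((((1 : ℂ) - φ (w : X)) * φ (A z)).re)]
    have hb2 : ‖((1 : ℂ) - φ (w : X)) * φ (A z)‖ ≤ (1 + ‖φ‖ * δ) * ‖φ (A z)‖ := by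
      rw [norm_mul]
      have h1 : ‖(1 : ℂ) - φ (w : X)‖ ≤ 1 + ‖φ‖ * δ := by
        calc ‖(1 : ℂ) - φ (w : X)‖ ≤ ‖(1 : ℂ)‖ + ‖φ (w : X)‖ := norm_sub_le _ _
        _ ≤ 1 + ‖φ‖ * δ := by rw [norm_one]; linarith
      exact mul_le_mul_of_nonneg_right h1 (norm_nonneg _)
    have hKle : K ≤ |K| := le_abs_self K
    rw [hKdef] at hKle
    linarith
end

section
/- Let A be the generator of a C₀-semigroup (e^{tA})_{t≥0} on a complex Banach space X and let φ ∈ X* with φ ∉ dom A*. Then for every ε > 0 there exist a vector y ∈ X with φ(y) = 1 and a strictly increasing sequence of indices (n_k)_{k≥0} such that |φ((e^{(1/n_k)A} P_y)^{n_k} y)| ≥ e^k − 2ε for all k ≥ 0, where P_y is the rank-one projection P_y z = φ(z) y. In particular, the sequence (e^{(1/n)A} P_y)^n y does not converge weakly. -/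
open Filter Topology

/-! ### Auxiliary infrastructure -/

noncomputable def chainAux {St : Type*} (Q : ℕ → St → Prop) (R : ℕ → St → St → Prop)
    (h0 : ∃ p, Q 0 p) (hstep : ∀ k p, Q k p → ∃ q, Q (k+1) q ∧ R k p q) :
    (k : ℕ) → {p : St // Q k p}
  | 0 => ⟨h0.choose, h0.choose_spec⟩
  | (k+1) =>
    ⟨(hstep k (chainAux Q R h0 hstep k).1 (chainAux Q R h0 hstep k).2).choose,
      (hstep k (chainAux Q R h0 hstep k).1 (chainAux Q R h0 hstep k).2).choose_spec.1⟩

lemma exists_chain {St : Type*} (Q : ℕ → St → Prop) (R : ℕ → St → St → Prop)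
    (h0 : ∃ p, Q 0 p) (hstep : ∀ k p, Q k p → ∃ q, Q (k+1) q ∧ R k p q) :
    ∃ g : ℕ → St, (∀ k, Q k (g k)) ∧ ∀ k, R k (g k) (g (k+1)) := by
  refine ⟨fun k => (chainAux Q R h0 hstep k).1, fun k => (chainAux Q R h0 hstep k).2, fun k => ?_⟩
  exact (hstep k (chainAux Q R h0 hstep k).1 (chainAux Q R h0 hstep k).2).choose_spec.2

lemma pow_sub_pow_le' {r s : ℝ} (hs : 0 ≤ s) (hsr : s ≤ r) (hr : 1 ≤ r) :
    ∀ n : ℕ, r ^ n - s ^ n ≤ n * (r - s) * r ^ n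
  | 0 => by simp
  | (n+1) => by
    have ih := pow_sub_pow_le' hs hsr hr n
    have h1 : s ^ n ≤ r ^ n := pow_le_pow_left₀ hs hsr n
    have h2 : (0:ℝ) ≤ r ^ n := pow_nonneg (hs.trans hsr) n
    have h2' : r ^ n ≤ r * r ^ n := by nlinarith
    have hr0 : (0:ℝ) ≤ r := by linarith
    have hrs0 : (0:ℝ) ≤ r - s := by linarith
    push_cast
    calc r ^ (n+1) - s ^ (n+1) = r * (r^n - s^n) + (r-s) * s^n := by ring
      _ ≤ r * (n*(r-s)*r^n) + (r-s) * r^n :=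
          add_le_add (mul_le_mul_of_nonneg_left ih hr0) (mul_le_mul_of_nonneg_left h1 hrs0)
      _ ≤ r * (n*(r-s)*r^n) + (r-s) * (r * r^n) :=
          add_le_add (le_refl _) (mul_le_mul_of_nonneg_left h2' hrs0)
      _ = (n + 1) * (r - s) * r ^ (n+1) := by ring

set_option linter.unusedSectionVars false

section basics
variable {X : Type*} [NormedAddCommGroup X] [NormedSpace ℂ X]
    (Sg : C0Semigroup X) (domA : Set X) (A : X → X)
    (hgen : IsGeneratorOf Sg domA A) (φ : X →L[ℂ] ℂ)

/-- The operator norm quantity `‖φ‖ ‖T(1/n)‖`. -/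
noncomputable def ccF (n : ℕ) : ℝ := ‖φ‖ * ‖Sg.T (1/(n:ℝ))‖

/-- The smallness threshold used in the construction. -/
noncomputable def gamF (ε : ℝ) (s : X) (n : ℕ) : ℝ :=
  3*ε / ((n:ℝ) * ccF Sg φ n * (ccF Sg φ n * (‖s‖+1) + 1)^n + 1)

lemma ccF_nonneg (n : ℕ) : 0 ≤ ccF Sg φ n := by unfold ccF; positivity

lemma gamF_pos (ε : ℝ) (hε : 0 < ε) (s : X) (n : ℕ) : 0 < gamF Sg φ ε s n := by
  unfold gamF ccF
  have h1 : (0:ℝ) ≤ (n:ℝ) * (‖φ‖ * ‖Sg.T (1/(n:ℝ))‖) *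
      ((‖φ‖ * ‖Sg.T (1/(n:ℝ))‖) * (‖s‖+1) + 1)^n := by positivity
  exact div_pos (by linarith) (by linarith)

include hgen

theorem hsmulA (c : ℂ) (x : X) (hx : x ∈ domA) : c • x ∈ domA ∧ A (c • x) = c • A x := by
  have h1 : Tendsto (fun t : ℝ => t⁻¹ • (Sg.T t (c • x) - c • x)) (𝓝[>] 0) (𝓝 (c • A x)) := by
    have h2 := (hgen.2 x hx).const_smul c
    refine h2.congr fun t => ?_
    rw [map_smul, ← smul_sub, smul_comm]
  have hm : c • x ∈ domA := (hgen.1 _).2 ⟨_, h1⟩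
  exact ⟨hm, tendsto_nhds_unique (hgen.2 _ hm) h1⟩

theorem haddA (x : X) (hx : x ∈ domA) (y : X) (hy : y ∈ domA) :
    x + y ∈ domA ∧ A (x + y) = A x + A y := by
  have h1 : Tendsto (fun t : ℝ => t⁻¹ • (Sg.T t (x + y) - (x + y))) (𝓝[>] 0) (𝓝 (A x + A y)) := by
    have h2 := (hgen.2 x hx).add (hgen.2 y hy)
    refine h2.congr fun t => ?_
    rw [map_add, ← smul_add]
    congr 1
    abel
  have hm : x + y ∈ domA := (hgen.1 _).2 ⟨_, h1⟩
  exact ⟨hm, tendsto_nhds_unique (hgen.2 _ hm) h1⟩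

theorem hTA (u : ℝ) (hu : 0 ≤ u) (x : X) (hx : x ∈ domA) :
    Sg.T u x ∈ domA ∧ A (Sg.T u x) = Sg.T u (A x) := by
  have h1 : Tendsto (fun t : ℝ => t⁻¹ • (Sg.T t (Sg.T u x) - Sg.T u x)) (𝓝[>] 0)
      (𝓝 (Sg.T u (A x))) := by
    have h2 : Tendsto (fun t : ℝ => Sg.T u (t⁻¹ • (Sg.T t x - x))) (𝓝[>] 0)
        (𝓝 (Sg.T u (A x))) := ((Sg.T u).continuous.tendsto _).comp (hgen.2 x hx)
    refine h2.congr' ?_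
    filter_upwards [self_mem_nhdsWithin] with t ht
    have e1 : Sg.T (t + u) x = Sg.T t (Sg.T u x) := by
      rw [Sg.T_add t u (le_of_lt ht) hu]; rfl
    have e2 : Sg.T (u + t) x = Sg.T u (Sg.T t x) := by
      rw [Sg.T_add u t hu (le_of_lt ht)]; rfl
    rw [(Sg.T u).map_smul_of_tower, map_sub, ← e2, add_comm, e1]
  have hm : Sg.T u x ∈ domA := (hgen.1 _).2 ⟨_, h1⟩
  exact ⟨hm, tendsto_nhds_unique (hgen.2 _ hm) h1⟩

theorem exists_u0 (hφ : ¬ ∃ C : ℝ, ∀ x ∈ domA, ‖φ (A x)‖ ≤ C * ‖x‖) :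
    ∃ u₀, u₀ ∈ domA ∧ φ u₀ = 1 := by
  have hnotall : ¬ (∀ u ∈ domA, φ u = 0) := by
    intro hall
    apply hφ
    refine ⟨0, fun x hx => ?_⟩
    have hzero : φ (A x) = 0 := by
      have h1 : Tendsto (fun t : ℝ => φ (t⁻¹ • (Sg.T t x - x))) (𝓝[>] 0) (𝓝 (φ (A x))) :=
        (φ.continuous.tendsto _).comp (hgen.2 x hx)
      have h2 : Tendsto (fun t : ℝ => φ (t⁻¹ • (Sg.T t x - x))) (𝓝[>] 0) (𝓝 0) := by
        refine tendsto_const_nhds.congr' ?_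
        filter_upwards [self_mem_nhdsWithin] with t ht
        have hT : φ (Sg.T t x) = 0 := hall _ (hTA Sg domA A hgen t (le_of_lt ht) x hx).1
        rw [φ.map_smul_of_tower, map_sub, hT, hall x hx, sub_zero, smul_zero]
      exact tendsto_nhds_unique h1 h2
    simp [hzero]
  push_neg at hnotall
  obtain ⟨u, hu, hne⟩ := hnotall
  refine ⟨(φ u)⁻¹ • u, (hsmulA Sg domA A hgen _ _ hu).1, ?_⟩
  rw [map_smul, smul_eq_mul, inv_mul_cancel₀ hne]

theorem lemL1 (hφ : ¬ ∃ C : ℝ, ∀ x ∈ domA, ‖φ (A x)‖ ≤ C * ‖x‖)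
    (u₀ : X) (hu₀A : u₀ ∈ domA) (hu₀φ : φ u₀ = 1)
    (δ : ℝ) (hδ : 0 < δ) (C : ℝ) :
    ∃ x, x ∈ domA ∧ φ x = 0 ∧ ‖x‖ ≤ δ ∧ C ≤ (φ (A x)).re := by
  have hA0 : A 0 = 0 := by
    have := hsmulA Sg domA A hgen 0 u₀ hu₀A
    rw [zero_smul] at this
    rw [this.2, zero_smul]
  push_neg at hφ
  set K : ℝ := ‖φ‖ * ‖φ (A u₀)‖ with hKdef
  set D : ℝ := 1 + ‖φ‖ * ‖u₀‖ with hDdef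
  have hD : 0 < D := by positivity
  set E : ℝ := (max C 0 + 1) * D / δ with hEdef
  have hE : 0 < E := by positivity
  obtain ⟨v, hv, hvlt⟩ := hφ (K + E)
  have hv0 : v ≠ 0 := by
    rintro rfl
    rw [hA0] at hvlt
    simp at hvlt
  have hvpos : 0 < ‖v‖ := norm_pos_iff.mpr hv0
  set w : X := v + (-(φ v)) • u₀ with hwdef
  have hwA : w ∈ domA ∧ A w = A v + (-(φ v)) • A u₀ := by
    have h1 := hsmulA Sg domA A hgen (-(φ v)) u₀ hu₀A
    have h2 := haddA Sg domA A hgen v hv _ h1.1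
    exact ⟨h2.1, by rw [h2.2, h1.2]⟩
  have hφw : φ w = 0 := by
    rw [hwdef, map_add, map_smul, smul_eq_mul, hu₀φ]
    ring
  have hAw : φ (A w) = φ (A v) - (φ v) * φ (A u₀) := by
    rw [hwA.2, map_add, map_smul, smul_eq_mul]
    ring
  have hφv : ‖φ v‖ ≤ ‖φ‖ * ‖v‖ := φ.le_opNorm v
  have hAwlb : E * ‖v‖ ≤ ‖φ (A w)‖ := by
    have h1 : ‖φ (A v)‖ - ‖φ v * φ (A u₀)‖ ≤ ‖φ (A w)‖ := by
      rw [hAw]; exact le_trans (sub_le_sub_left (le_refl _) _) (norm_sub_norm_le _ _)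
    have h2 : ‖φ v * φ (A u₀)‖ ≤ K * ‖v‖ := by
      rw [norm_mul, hKdef]
      calc ‖φ v‖ * ‖φ (A u₀)‖ ≤ (‖φ‖ * ‖v‖) * ‖φ (A u₀)‖ :=
            mul_le_mul_of_nonneg_right hφv (norm_nonneg _)
        _ = ‖φ‖ * ‖φ (A u₀)‖ * ‖v‖ := by ring
    nlinarith [hvlt]
  have hw_norm : ‖w‖ ≤ D * ‖v‖ := by
    calc ‖w‖ ≤ ‖v‖ + ‖(-(φ v)) • u₀‖ := norm_add_le _ _
      _ = ‖v‖ + ‖φ v‖ * ‖u₀‖ := by rw [norm_smul, norm_neg]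
      _ ≤ ‖v‖ + (‖φ‖ * ‖v‖) * ‖u₀‖ := by nlinarith [norm_nonneg u₀]
      _ = D * ‖v‖ := by rw [hDdef]; ring
  have hw0 : w ≠ 0 := by
    rintro h
    rw [h, hA0] at hAwlb
    simp at hAwlb
    nlinarith
  have hwpos : 0 < ‖w‖ := norm_pos_iff.mpr hw0
  set z : ℂ := φ (A w) with hzdef
  have hz0 : z ≠ 0 := by
    intro h
    rw [h, norm_zero] at hAwlb
    nlinarith
  set r : ℝ := ‖z‖ * δ / ‖w‖ with hrdef
  have hr : 0 < r := by
    have : 0 < ‖z‖ := norm_pos_iff.mpr hz0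
    positivity
  set c : ℂ := (r : ℂ) / z with hcdef
  refine ⟨c • w, (hsmulA Sg domA A hgen c w hwA.1).1, ?_, ?_, ?_⟩
  · rw [map_smul, smul_eq_mul, hφw, mul_zero]
  · rw [norm_smul, hcdef, norm_div, Complex.norm_real, Real.norm_of_nonneg hr.le, hrdef]
    have hzpos : 0 < ‖z‖ := norm_pos_iff.mpr hz0
    refine le_of_eq ?_
    rw [show ‖z‖ * δ / ‖w‖ / ‖z‖ * ‖w‖ = δ * (‖z‖ / ‖z‖) * (‖w‖ / ‖w‖) by ring,
      div_self hzpos.ne', div_self hwpos.ne', mul_one, mul_one]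
  · have hAx : φ (A (c • w)) = (r : ℂ) := by
      rw [(hsmulA Sg domA A hgen c w hwA.1).2, map_smul, smul_eq_mul, ← hzdef, hcdef,
        div_mul_cancel₀ _ hz0]
    rw [hAx, Complex.ofReal_re, hrdef]
    rw [le_div_iff₀ hwpos]
    calc C * ‖w‖ ≤ (max C 0 + 1) * (D * ‖v‖) := by
          nlinarith [le_max_left C 0, le_max_right C 0, hw_norm, norm_nonneg w, hwpos]
      _ ≤ ‖z‖ * δ := by
          have h1 : E * ‖v‖ ≤ ‖z‖ := hAwlb
          rw [hEdef] at h1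
          rw [div_mul_eq_mul_div, div_le_iff₀ hδ] at h1
          calc (max C 0 + 1) * (D * ‖v‖) = max C 0 * D * ‖v‖ + 1 * D * ‖v‖ := by ring
            _ = (max C 0 + 1) * D * ‖v‖ := by ring
            _ ≤ ‖z‖ * δ := h1

theorem lemL2 (ε : ℝ) (hε : 0 < ε) (s : X) (hs : s ∈ domA) (hφs : φ s = 1) (k : ℕ)
    (hk : (k : ℝ) + ε + 2 ≤ (φ (A s)).re) :
    ∀ᶠ n : ℕ in atTop, Real.exp k + ε ≤ ‖φ (Sg.T (1/(n:ℝ)) s)‖ ^ n := by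
  set c : ℝ := (k : ℝ) + ε + 1 with hcdef
  have hc : 0 < c := by positivity
  have h1 : Tendsto (fun n : ℕ => (1/(n:ℝ))) atTop (𝓝[>] 0) := by
    rw [tendsto_nhdsWithin_iff]
    refine ⟨tendsto_one_div_atTop_nhds_zero_nat, ?_⟩
    filter_upwards [eventually_ge_atTop 1] with n hn
    have : (0:ℝ) < n := by exact_mod_cast hn
    exact Set.mem_Ioi.mpr (by positivity)
  have h2 : Tendsto (fun n : ℕ => (1/(n:ℝ))⁻¹ • (Sg.T (1/(n:ℝ)) s - s)) atTop (𝓝 (A s)) :=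
    (hgen.2 s hs).comp h1
  have h3 : Tendsto (fun n : ℕ => ((1/(n:ℝ))⁻¹ • (φ (Sg.T (1/(n:ℝ)) s) - 1) : ℂ)) atTop
      (𝓝 (φ (A s))) := by
    have := (φ.continuous.tendsto _).comp h2
    refine this.congr fun n => ?_
    rw [Function.comp_apply, φ.map_smul_of_tower, map_sub, hφs]
  have h4 : Tendsto (fun n : ℕ => (1/(n:ℝ))⁻¹ * ((φ (Sg.T (1/(n:ℝ)) s)).re - 1)) atTop
      (𝓝 ((φ (A s)).re)) := by
    have := (Complex.continuous_re.tendsto _).comp h3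
    refine this.congr fun n => ?_
    simp [Complex.real_smul, Complex.mul_re]
  have h5 : ∀ᶠ n : ℕ in atTop, c ≤ (1/(n:ℝ))⁻¹ * ((φ (Sg.T (1/(n:ℝ)) s)).re - 1) :=
    Filter.Tendsto.eventually_const_le (by linarith) h4
  have hexpc : Real.exp k + ε < Real.exp c := by
    have e1 : Real.exp c = Real.exp k * (Real.exp ε * Real.exp 1) := by
      rw [hcdef, Real.exp_add, Real.exp_add, mul_assoc]
    have e2 : (1:ℝ) + ε ≤ Real.exp ε := by linarith [Real.add_one_le_exp ε]
    have e3 : (2:ℝ) ≤ Real.exp 1 := by linarith [Real.add_one_le_exp (1:ℝ)]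
    have e4 : (1:ℝ) ≤ Real.exp k := Real.one_le_exp (by positivity)
    have e5 : (1 + ε) * 2 ≤ Real.exp ε * Real.exp 1 :=
      mul_le_mul e2 e3 (by norm_num) (Real.exp_pos ε).le
    have e6 : Real.exp (k:ℝ) * ((1 + ε) * 2) ≤ Real.exp (k:ℝ) * (Real.exp ε * Real.exp 1) :=
      mul_le_mul_of_nonneg_left e5 (Real.exp_pos _).le
    have e7 : ε * 1 ≤ ε * Real.exp (k:ℝ) := mul_le_mul_of_nonneg_left e4 hε.le
    nlinarith [e6, e7]
  have h6 : ∀ᶠ n : ℕ in atTop, Real.exp k + ε ≤ (1 + c/(n:ℝ)) ^ n :=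
    Filter.Tendsto.eventually_const_le hexpc (Real.tendsto_one_add_div_pow_exp c)
  filter_upwards [h5, h6, eventually_ge_atTop 1] with n h5n h6n hn1
  have hn : (0:ℝ) < n := by exact_mod_cast hn1
  have hinv : ((1:ℝ)/(n:ℝ))⁻¹ = (n:ℝ) := by rw [one_div, inv_inv]
  rw [hinv, mul_comm] at h5n
  have h7 : 1 + c / (n:ℝ) ≤ (φ (Sg.T (1/(n:ℝ)) s)).re := by
    have := (div_le_iff₀ hn).mpr h5n
    linarith
  have h8 : 1 + c / (n:ℝ) ≤ ‖φ (Sg.T (1/(n:ℝ)) s)‖ :=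
    h7.trans (Complex.re_le_norm _)
  calc Real.exp k + ε ≤ (1 + c/(n:ℝ)) ^ n := h6n
    _ ≤ ‖φ (Sg.T (1/(n:ℝ)) s)‖ ^ n := pow_le_pow_left₀ (by positivity) h8 n

theorem chain_main (hφ : ¬ ∃ C : ℝ, ∀ x ∈ domA, ‖φ (A x)‖ ≤ C * ‖x‖)
    (ε : ℝ) (hε : 0 < ε) (u₀ : X) (hu₀A : u₀ ∈ domA) (hu₀φ : φ u₀ = 1) :
    ∃ (sv : ℕ → X) (nv : ℕ → ℕ) (mv : ℕ → ℝ),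
      (∀ k, sv k ∈ domA) ∧ (∀ k, φ (sv k) = 1) ∧ (∀ k, 1 ≤ nv k) ∧
      (∀ k : ℕ, Real.exp k + ε ≤ ‖φ (Sg.T (1/(nv k : ℝ)) (sv k))‖ ^ (nv k)) ∧
      (∀ k, 0 < mv k) ∧ (∀ k, mv k ≤ 1) ∧
      (∀ k, mv k ≤ gamF Sg φ ε (sv k) (nv k)) ∧
      (∀ k, nv k < nv (k+1)) ∧
      (∀ k, ‖sv (k+1) - sv k‖ ≤ (1/2:ℝ)^(k+1) * mv k) ∧
      (∀ k, mv (k+1) ≤ mv k) := by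
  have hL1 := lemL1 Sg domA A hgen φ hφ u₀ hu₀A hu₀φ
  have hL2 := lemL2 Sg domA A hgen φ ε hε
  have h0 : ∃ p : X × ℕ × ℝ, p.1 ∈ domA ∧ φ p.1 = 1 ∧ 0 ≤ (φ (A p.1)).re ∧ 1 ≤ p.2.1 ∧
      (Real.exp (0:ℕ) + ε ≤ ‖φ (Sg.T (1/(p.2.1 : ℝ)) p.1)‖ ^ p.2.1) ∧
      0 < p.2.2 ∧ p.2.2 ≤ 1 ∧ p.2.2 ≤ gamF Sg φ ε p.1 p.2.1 := by
    obtain ⟨x, hxA, hxφ, hxn, hxre⟩ := hL1 1 one_pos (ε + 2 + ‖φ (A u₀)‖)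
    have hsA := haddA Sg domA A hgen u₀ hu₀A x hxA
    have hφs : φ (u₀ + x) = 1 := by rw [map_add, hu₀φ, hxφ, add_zero]
    have hre : ((0:ℕ) : ℝ) + ε + 2 ≤ (φ (A (u₀ + x))).re := by
      rw [hsA.2, map_add, Complex.add_re]
      have h1 : -(‖φ (A u₀)‖) ≤ (φ (A u₀)).re := by
        have h2 := Complex.abs_re_le_norm (φ (A u₀))
        have h3 : ‖φ (A u₀)‖ = ‖φ (A u₀)‖ := rfl
        have h4 := neg_abs_le (φ (A u₀)).re
        linarith
      push_cast
      linarith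
    obtain ⟨n, hn⟩ := ((hL2 (u₀+x) hsA.1 hφs 0 hre).and (eventually_ge_atTop 1)).exists
    refine ⟨(u₀ + x, n, min 1 (gamF Sg φ ε (u₀+x) n)), hsA.1, hφs, ?_, hn.2, hn.1,
      lt_min one_pos (gamF_pos Sg φ ε hε _ _), min_le_left _ _, min_le_right _ _⟩
    push_cast at hre
    linarith
  have hstep : ∀ (k : ℕ) (p : X × ℕ × ℝ),
      (p.1 ∈ domA ∧ φ p.1 = 1 ∧ 0 ≤ (φ (A p.1)).re ∧ 1 ≤ p.2.1 ∧
        (Real.exp k + ε ≤ ‖φ (Sg.T (1/(p.2.1 : ℝ)) p.1)‖ ^ p.2.1) ∧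
        0 < p.2.2 ∧ p.2.2 ≤ 1 ∧ p.2.2 ≤ gamF Sg φ ε p.1 p.2.1) →
      ∃ q : X × ℕ × ℝ,
        (q.1 ∈ domA ∧ φ q.1 = 1 ∧ 0 ≤ (φ (A q.1)).re ∧ 1 ≤ q.2.1 ∧
          (Real.exp (k+1:ℕ) + ε ≤ ‖φ (Sg.T (1/(q.2.1 : ℝ)) q.1)‖ ^ q.2.1) ∧
          0 < q.2.2 ∧ q.2.2 ≤ 1 ∧ q.2.2 ≤ gamF Sg φ ε q.1 q.2.1) ∧
        (p.2.1 < q.2.1 ∧ ‖q.1 - p.1‖ ≤ (1/2:ℝ)^(k+1) * p.2.2 ∧ q.2.2 ≤ p.2.2) := by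
    rintro k ⟨s, n, m⟩ ⟨hsA, hφs, hre0, hn1, hpow, hm0, hm1, hmg⟩
    obtain ⟨x, hxA, hxφ, hxn, hxre⟩ :=
      hL1 ((1/2:ℝ)^(k+1) * m) (by positivity) (((k+1:ℕ) : ℝ) + ε + 2)
    have hs'A := haddA Sg domA A hgen s hsA x hxA
    have hφs' : φ (s + x) = 1 := by rw [map_add, hφs, hxφ, add_zero]
    have hre' : (((k+1:ℕ)) : ℝ) + ε + 2 ≤ (φ (A (s + x))).re := by
      rw [hs'A.2, map_add, Complex.add_re]
      linarith
    obtain ⟨n', hn'⟩ := ((hL2 (s+x) hs'A.1 hφs' (k+1) hre').and (eventually_gt_atTop n)).exists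
    refine ⟨(s + x, n', min m (min 1 (gamF Sg φ ε (s+x) n'))),
      ⟨hs'A.1, hφs', by push_cast at hre' ⊢; linarith, hn1.trans hn'.2.le, hn'.1,
        lt_min hm0 (lt_min one_pos (gamF_pos Sg φ ε hε _ _)),
        (min_le_right _ _).trans (min_le_left _ _),
        (min_le_right _ _).trans (min_le_right _ _)⟩,
      hn'.2, by simpa using hxn, min_le_left _ _⟩
  obtain ⟨g, hQ, hR⟩ := exists_chain
    (fun k (p : X × ℕ × ℝ) => p.1 ∈ domA ∧ φ p.1 = 1 ∧ 0 ≤ (φ (A p.1)).re ∧ 1 ≤ p.2.1 ∧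
      (Real.exp k + ε ≤ ‖φ (Sg.T (1/(p.2.1 : ℝ)) p.1)‖ ^ p.2.1) ∧
      0 < p.2.2 ∧ p.2.2 ≤ 1 ∧ p.2.2 ≤ gamF Sg φ ε p.1 p.2.1)
    (fun k p q => p.2.1 < q.2.1 ∧ ‖q.1 - p.1‖ ≤ (1/2:ℝ)^(k+1) * p.2.2 ∧ q.2.2 ≤ p.2.2)
    h0 hstep
  exact ⟨fun k => (g k).1, fun k => (g k).2.1, fun k => (g k).2.2,
    fun k => (hQ k).1, fun k => (hQ k).2.1, fun k => (hQ k).2.2.2.1,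
    fun k => (hQ k).2.2.2.2.1, fun k => (hQ k).2.2.2.2.2.1, fun k => (hQ k).2.2.2.2.2.2.1,
    fun k => (hQ k).2.2.2.2.2.2.2, fun k => (hR k).1, fun k => (hR k).2.1, fun k => (hR k).2.2⟩

end basics

theorem stmt_11 {X : Type*} [NormedAddCommGroup X] [NormedSpace ℂ X] [CompleteSpace X]
    (Sg : C0Semigroup X) (domA : Set X) (A : X → X)
    (hgen : IsGeneratorOf Sg domA A)
    (φ : X →L[ℂ] ℂ)
    (hφ : ¬ ∃ C : ℝ, ∀ x ∈ domA, ‖φ (A x)‖ ≤ C * ‖x‖)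
    (ε : ℝ) (hε : 0 < ε) :
    ∃ y : X, φ y = 1 ∧
      (∃ nk : ℕ → ℕ, StrictMono nk ∧ (∀ k : ℕ, 1 ≤ nk k) ∧
        ∀ k : ℕ,
          Real.exp k - 2 * ε ≤
            ‖φ ((((Sg.T (1 / (nk k))).comp (φ.smulRight y)) ^ nk k) y)‖) ∧
      ¬ ∃ z : X, ∀ ψ : X →L[ℂ] ℂ,
          Tendsto
            (fun n : ℕ => ψ ((((Sg.T (1 / n)).comp (φ.smulRight y)) ^ n) y))
            atTop (𝓝 (ψ z)) := by
  classical
  obtain ⟨u₀, hu₀A, hu₀φ⟩ := exists_u0 Sg domA A hgen φ hφ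
  obtain ⟨sv, nv, mv, hsA, hsφ, hn1, hpow, hm0, hm1, hmg, hnlt, hstepn, hmdec⟩ :=
    chain_main Sg domA A hgen φ hφ ε hε u₀ hu₀A hu₀φ
  -- the sequence (sv k) is Cauchy
  have hdist : ∀ n : ℕ, dist (sv n) (sv (n+1)) ≤ 1 * (1/2:ℝ)^n := by
    intro n
    rw [dist_eq_norm, norm_sub_rev]
    have h1 := hstepn n
    have h2 : (1/2:ℝ)^(n+1) * mv n ≤ (1/2:ℝ)^(n+1) * 1 :=
      mul_le_mul_of_nonneg_left (hm1 n) (by positivity)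
    have h3 : (1/2:ℝ)^(n+1) ≤ (1/2:ℝ)^n := by
      apply pow_le_pow_of_le_one (by norm_num) (by norm_num)
      omega
    linarith
  have hcauchy : CauchySeq sv := cauchySeq_of_le_geometric (1/2) 1 (by norm_num) hdist
  obtain ⟨y, hy⟩ := cauchySeq_tendsto_of_complete hcauchy
  have hφy : φ y = 1 := by
    have h1 : Tendsto (fun k => φ (sv k)) atTop (𝓝 (φ y)) := (φ.continuous.tendsto y).comp hy
    have h2 : Tendsto (fun k => φ (sv k)) atTop (𝓝 1) :=
      tendsto_const_nhds.congr fun k => (hsφ k).symm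
    exact tendsto_nhds_unique h1 h2
  have hmanti : Antitone mv := antitone_nat_of_succ_le hmdec
  -- tail estimate
  have htail : ∀ k, ‖y - sv k‖ ≤ mv k * (1/2:ℝ)^k := by
    intro k
    have key : ∀ j, k ≤ j → ‖sv j - sv k‖ ≤ mv k * ((1/2:ℝ)^k - (1/2:ℝ)^j) := by
      intro j hj
      induction j, hj using Nat.le_induction with
      | base => simp
      | succ j hkj ih =>
        have h2 := hstepn j
        have h3 : mv j ≤ mv k := hmanti hkj
        have h4 : (0:ℝ) ≤ (1/2:ℝ)^(j+1) := by positivity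
        calc ‖sv (j+1) - sv k‖ ≤ ‖sv (j+1) - sv j‖ + ‖sv j - sv k‖ := by
              have e : sv (j+1) - sv k = (sv (j+1) - sv j) + (sv j - sv k) := by abel
              rw [e]; exact norm_add_le _ _
          _ ≤ (1/2:ℝ)^(j+1) * mv j + mv k * ((1/2:ℝ)^k - (1/2:ℝ)^j) := add_le_add h2 ih
          _ ≤ (1/2:ℝ)^(j+1) * mv k + mv k * ((1/2:ℝ)^k - (1/2:ℝ)^j) := by
              have := mul_le_mul_of_nonneg_left h3 h4
              linarith
          _ = mv k * ((1/2:ℝ)^k - (1/2:ℝ)^(j+1)) := by rw [pow_succ]; ring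
    have hlim : Tendsto (fun j => ‖sv j - sv k‖) atTop (𝓝 ‖y - sv k‖) :=
      (hy.sub_const (sv k)).norm
    refine le_of_tendsto hlim ?_
    filter_upwards [eventually_ge_atTop k] with j hj
    have h5 := key j hj
    have h6 : (0:ℝ) ≤ (1/2:ℝ)^j := by positivity
    have h7 : 0 ≤ mv k := (hm0 k).le
    nlinarith [mul_nonneg h7 h6]
  -- iteration identity
  have hiter : ∀ (t : ℝ) (N : ℕ),
      φ ((((Sg.T t).comp (φ.smulRight y)) ^ N) y) = (φ (Sg.T t y)) ^ N := by
    intro t N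
    induction N with
    | zero => simp [hφy]
    | succ N ih =>
      rw [pow_succ', ContinuousLinearMap.mul_apply, ContinuousLinearMap.comp_apply,
        ContinuousLinearMap.smulRight_apply, map_smul, map_smul, smul_eq_mul, ih, pow_succ]
  -- main estimate for the limit vector y
  have hmain : ∀ k : ℕ, Real.exp k - 2*ε ≤ ‖φ (Sg.T (1/(nv k : ℝ)) y)‖ ^ (nv k) := by
    intro k
    set n := nv k with hndef
    set s := sv k with hsdef
    set m := mv k with hmdef
    set cn : ℝ := ‖φ‖ * ‖Sg.T (1/(n:ℝ))‖ with hcndef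
    set Rn : ℝ := cn * (‖s‖ + 1) + 1 with hRndef
    have hcn : 0 ≤ cn := by positivity
    have hRn1 : 1 ≤ Rn := by nlinarith [norm_nonneg s]
    have hgam : m ≤ 3*ε / ((n:ℝ) * cn * Rn^n + 1) := by
      have := hmg k
      unfold gamF ccF at this
      exact this
    have hmnn : 0 ≤ m := (hm0 k).le
    have hpowk := hpow k
    set a : ℂ := φ (Sg.T (1/(n:ℝ)) s) with hadef
    set b : ℂ := φ (Sg.T (1/(n:ℝ)) y) with hbdef
    have hab : ‖a - b‖ ≤ cn * m := by
      rw [hadef, hbdef, ← map_sub, ← map_sub]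
      have c1 : ‖φ (Sg.T (1/(n:ℝ)) (s - y))‖ ≤ ‖φ‖ * ‖Sg.T (1/(n:ℝ)) (s - y)‖ := φ.le_opNorm _
      have c2 : ‖Sg.T (1/(n:ℝ)) (s - y)‖ ≤ ‖Sg.T (1/(n:ℝ))‖ * ‖s - y‖ := (Sg.T _).le_opNorm _
      have c3 : ‖s - y‖ ≤ m := by
        rw [norm_sub_rev]
        have := htail k
        have h8 : (1/2:ℝ)^k ≤ 1 := pow_le_one₀ (by norm_num) (by norm_num)
        nlinarith
      calc ‖φ (Sg.T (1/(n:ℝ)) (s - y))‖ ≤ ‖φ‖ * (‖Sg.T (1/(n:ℝ))‖ * ‖s - y‖) :=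
            c1.trans (mul_le_mul_of_nonneg_left c2 (norm_nonneg φ))
        _ = cn * ‖s - y‖ := by rw [hcndef]; ring
        _ ≤ cn * m := mul_le_mul_of_nonneg_left c3 hcn
    have hexp1 : (1:ℝ) ≤ Real.exp k := Real.one_le_exp (by positivity)
    have hr1 : 1 < ‖a‖ := by
      by_contra h
      push_neg at h
      have : ‖a‖ ^ n ≤ 1 := pow_le_one₀ (norm_nonneg _) h
      linarith
    have hrR : ‖a‖ ≤ Rn := by
      have c1 : ‖a‖ ≤ ‖φ‖ * ‖Sg.T (1/(n:ℝ)) s‖ := φ.le_opNorm _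
      have c2 : ‖Sg.T (1/(n:ℝ)) s‖ ≤ ‖Sg.T (1/(n:ℝ))‖ * ‖s‖ := (Sg.T _).le_opNorm _
      have : ‖a‖ ≤ cn * ‖s‖ := by
        calc ‖a‖ ≤ ‖φ‖ * (‖Sg.T (1/(n:ℝ))‖ * ‖s‖) :=
              c1.trans (mul_le_mul_of_nonneg_left c2 (norm_nonneg φ))
          _ = cn * ‖s‖ := by rw [hcndef]; ring
      nlinarith
    rcases le_or_gt ‖a‖ ‖b‖ with h | h
    · have : ‖a‖ ^ n ≤ ‖b‖ ^ n := pow_le_pow_left₀ (norm_nonneg _) h n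
      linarith
    · have h9 : ‖a‖ - ‖b‖ ≤ ‖a - b‖ := norm_sub_norm_le _ _
      have h10 := pow_sub_pow_le' (norm_nonneg b) h.le hr1.le n
      have h11 : ‖a‖ ^ n ≤ Rn ^ n := pow_le_pow_left₀ (norm_nonneg a) hrR n
      have hd : (0:ℝ) ≤ (n:ℝ) * cn * Rn^n :=
        mul_nonneg (mul_nonneg (Nat.cast_nonneg n) hcn) (pow_nonneg (by linarith) n)
      have h12 : ‖a‖ ^ n - ‖b‖ ^ n ≤ 3*ε := by
        have s1 : (n:ℝ) * (‖a‖ - ‖b‖) * ‖a‖^n ≤ (n:ℝ) * (cn * m) * Rn^n := by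
          have t1 : (0:ℝ) ≤ (n:ℝ) * (‖a‖ - ‖b‖) := by
            apply mul_nonneg (Nat.cast_nonneg n)
            linarith
          have t2 : (n:ℝ) * (‖a‖ - ‖b‖) ≤ (n:ℝ) * (cn * m) :=
            mul_le_mul_of_nonneg_left (h9.trans hab) (Nat.cast_nonneg n)
          have t3 : (0:ℝ) ≤ ‖a‖ ^ n := pow_nonneg (norm_nonneg a) n
          exact mul_le_mul t2 h11 t3 (mul_nonneg (Nat.cast_nonneg n) (mul_nonneg hcn hmnn))
        have s2 : (n:ℝ) * (cn * m) * Rn^n = ((n:ℝ) * cn * Rn^n) * m := by ring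
        have s3 : ((n:ℝ) * cn * Rn^n) * m ≤ ((n:ℝ) * cn * Rn^n) * (3*ε / ((n:ℝ) * cn * Rn^n + 1)) :=
          mul_le_mul_of_nonneg_left hgam hd
        have s4 : ((n:ℝ) * cn * Rn^n) * (3*ε / ((n:ℝ) * cn * Rn^n + 1)) ≤ 3*ε := by
          rw [mul_div_assoc']
          rw [div_le_iff₀ (by linarith)]
          nlinarith
        linarith
      linarith
  refine ⟨y, hφy, ⟨nv, strictMono_nat_of_lt_succ hnlt, hn1, fun k => ?_⟩, ?_⟩
  · rw [hiter (1/(nv k : ℝ)) (nv k), norm_pow]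
    exact hmain k
  · rintro ⟨z, hz⟩
    have h1 := (hz φ).norm
    have h2 := h1.comp (strictMono_nat_of_lt_succ hnlt).tendsto_atTop
    have h3 : ∀ᶠ k : ℕ in atTop,
        ‖φ ((((Sg.T (1/(nv k : ℝ))).comp (φ.smulRight y)) ^ (nv k)) y)‖ ≤ ‖φ z‖ + 1 := by
      have := h2.eventually (eventually_le_nhds (lt_add_one ‖φ z‖))
      filter_upwards [this] with k hk
      exact hk
    obtain ⟨k0, hk0⟩ := exists_nat_gt (‖φ z‖ + 1 + 2*ε)
    obtain ⟨k, hk1, hk2⟩ := (h3.and (eventually_ge_atTop k0)).exists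
    have h4 : Real.exp k - 2*ε ≤ ‖φ z‖ + 1 := by
      refine le_trans ?_ hk1
      rw [hiter (1/(nv k : ℝ)) (nv k), norm_pow]
      exact hmain k
    have h5 : (k:ℝ) + 1 ≤ Real.exp k := by linarith [Real.add_one_le_exp (k:ℝ)]
    have h6 : (k0:ℝ) ≤ k := by exact_mod_cast hk2
    linarith
end
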